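/- arXiv:2111.10514 — 6 statements merged into one kernel-verified Lean document; each statement's English description precedes it below -/
import Mathlib

section
/- In the n-dimensional folded hypercube FQ_n with n ≥ 4, any two distinct vertices that have a common neighbor have exactly two common neighbors. -/
/-- Number of coordinates in which two vertices of the cube differ (Hamming distance). -/
def diffCount {n : ℕ} (x y : Fin n → Bool) : ℕ :=
  (Finset.univ.filter fun i => x i ≠ y i).card

lemma diffCount_comm {n : ℕ} (x y : Fin n → Bool) : diffCount x y = diffCount y x := by
  unfold diffCount
  congr 1
  apply Finset.filter_congr
  intro i _
  exact ne_comm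

/-- The `n`-dimensional hypercube. -/
def Qn (n : ℕ) : SimpleGraph (Fin n → Bool) where
  Adj x y := diffCount x y = 1
  symm := ⟨by intro x y h; rw [diffCount_comm]; exact h⟩
  loopless := ⟨by intro x h; simp [diffCount] at h⟩

/-- The `n`-dimensional folded hypercube. -/
def FQn (n : ℕ) : SimpleGraph (Fin n → Bool) where
  Adj x y := x ≠ y ∧ (diffCount x y = 1 ∨ diffCount x y = n)
  symm := ⟨by
    rintro x y ⟨h1, h2⟩
    exact ⟨h1.symm, by rw [diffCount_comm]; exact h2⟩⟩
  loopless := ⟨fun x h => h.1 rfl⟩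

/-- Flip bit `i` (hypercube neighbour `u^{i+1}` in 1-based notation). -/
def hFlip {n : ℕ} (u : Fin n → Bool) (i : Fin n) : Fin n → Bool :=
  fun j => if j = i then !(u j) else u j

/-- Flip bits `0,…,i` (complement neighbour `ū^{i+1}` in 1-based notation). -/
def cFlip {n : ℕ} (u : Fin n → Bool) (i : Fin n) : Fin n → Bool :=
  fun j => if j ≤ i then !(u j) else u j

lemma hFlip_hFlip {n : ℕ} (u : Fin n → Bool) (i : Fin n) : hFlip (hFlip u i) i = u := by
  funext j; simp only [hFlip]; split <;> simp

lemma cFlip_cFlip {n : ℕ} (u : Fin n → Bool) (i : Fin n) : cFlip (cFlip u i) i = u := by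
  funext j; simp only [cFlip]; split <;> simp

/-- The `n`-dimensional augmented cube. -/
def AQn (n : ℕ) : SimpleGraph (Fin n → Bool) where
  Adj x y := x ≠ y ∧ ((∃ i, y = hFlip x i) ∨ (∃ i : Fin n, 1 ≤ i.val ∧ y = cFlip x i))
  symm := ⟨by
    rintro x y ⟨h1, h2⟩
    refine ⟨h1.symm, ?_⟩
    rcases h2 with ⟨i, rfl⟩ | ⟨i, hi, rfl⟩
    · exact Or.inl ⟨i, (hFlip_hFlip x i).symm⟩
    · exact Or.inr ⟨i, hi, (cFlip_cFlip x i).symm⟩⟩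
  loopless := ⟨fun x h => h.1 rfl⟩

section Aux
variable {n : ℕ}

lemma bool_eq_of_ne_ne {a b c : Bool} (h1 : a ≠ c) (h2 : b ≠ c) : a = b := by
  cases a <;> cases b <;> cases c <;> simp_all

lemma bool_ne_iff {a b : Bool} : a ≠ b ↔ b = !a := by
  cases a <;> cases b <;> simp

lemma dc_one_iff (x y : Fin n → Bool) :
    diffCount x y = 1 ↔ ∃ i, x i ≠ y i ∧ ∀ j, j ≠ i → x j = y j := by
  unfold diffCount
  rw [Finset.card_eq_one]
  constructor
  · rintro ⟨i, hi⟩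
    refine ⟨i, ?_, ?_⟩
    · have : i ∈ Finset.univ.filter fun i => x i ≠ y i := hi ▸ Finset.mem_singleton_self i
      simpa using this
    · intro j hj
      by_contra hxy
      have : j ∈ Finset.univ.filter fun i => x i ≠ y i := by simpa using hxy
      rw [hi, Finset.mem_singleton] at this
      exact hj this
  · rintro ⟨i, h1, h2⟩
    refine ⟨i, ?_⟩
    ext j
    simp only [Finset.mem_filter, Finset.mem_univ, true_and, Finset.mem_singleton]
    constructor
    · intro hj; by_contra hji; exact hj (h2 j hji)
    · rintro rfl; exact h1

lemma dc_n_iff (x y : Fin n → Bool) :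
    diffCount x y = n ↔ ∀ i, x i ≠ y i := by
  unfold diffCount
  constructor
  · intro h i
    have hu : Finset.univ.filter (fun i => x i ≠ y i) = Finset.univ :=
      Finset.eq_univ_of_card _ (by simpa using h)
    have hi : i ∈ Finset.univ.filter (fun i => x i ≠ y i) := hu.symm ▸ Finset.mem_univ i
    simpa using hi
  · intro h
    rw [Finset.filter_true_of_mem (fun i _ => h i)]
    simp

lemma exists_fresh (hn : 4 ≤ n) (a b c : Fin n) : ∃ k : Fin n, k ≠ a ∧ k ≠ b ∧ k ≠ c := by
  by_contra h
  push_neg at h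
  have hsub : (Finset.univ : Finset (Fin n)) ⊆ {a, b, c} := by
    intro k _
    simp only [Finset.mem_insert, Finset.mem_singleton]
    by_cases h1 : k = a
    · exact Or.inl h1
    by_cases h2 : k = b
    · exact Or.inr (Or.inl h2)
    exact Or.inr (Or.inr (h k h1 h2))
  have hc := Finset.card_le_card hsub
  have h3 : ({a, b, c} : Finset (Fin n)).card ≤ 3 := by
    refine (Finset.card_insert_le _ _).trans ?_
    have := Finset.card_insert_le b ({c} : Finset (Fin n))
    simp only [Finset.card_singleton] at this
    omega
  simp only [Finset.card_univ, Fintype.card_fin] at hc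
  omega

/-- If `w` is at Hamming distance 1 from both `u` and `v` (which are distinct), then
`u,v` differ in exactly two coordinates, and `w` is a flip of `u` at one of them. -/
lemma case11 {u v w : Fin n → Bool} (huv : u ≠ v)
    (h1 : diffCount u w = 1) (h2 : diffCount v w = 1) :
    ∃ i j, i ≠ j ∧ u i ≠ v i ∧ u j ≠ v j ∧ (∀ k, k ≠ i → k ≠ j → u k = v k) ∧
      w = hFlip u i := by
  obtain ⟨i, hi1, hi2⟩ := (dc_one_iff u w).mp h1
  obtain ⟨j, hj1, hj2⟩ := (dc_one_iff v w).mp h2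
  by_cases hij : i = j
  · subst hij
    exfalso
    apply huv
    funext k
    by_cases hk : k = i
    · subst hk; exact bool_eq_of_ne_ne hi1 hj1
    · rw [hi2 k hk, hj2 k hk]
  refine ⟨i, j, hij, ?_, ?_, ?_, ?_⟩
  · rw [hj2 i hij]; exact hi1
  · rw [hi2 j (Ne.symm hij)]
    exact fun hh => hj1 hh.symm
  · intro k hki hkj
    rw [hi2 k hki, hj2 k hkj]
  · funext k
    simp only [hFlip]
    by_cases hk : k = i
    · subst hk; rw [if_pos rfl, ← bool_ne_iff.mp hi1]
    · rw [if_neg hk, ← hi2 k hk]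

end Aux

/-- The complement of a vertex. -/
def bcompl {n : ℕ} (u : Fin n → Bool) : Fin n → Bool := fun i => !(u i)

section Main
variable {n : ℕ}

lemma bool_ne_iff' {a b : Bool} : a ≠ b ↔ a = !b := by
  cases a <;> cases b <;> simp

lemma FQn_adj (x y : Fin n → Bool) :
    (FQn n).Adj x y ↔ x ≠ y ∧ (diffCount x y = 1 ∨ diffCount x y = n) := Iff.rfl

lemma adj_hFlip (u : Fin n → Bool) (i : Fin n) : (FQn n).Adj u (hFlip u i) := by
  rw [FQn_adj]
  constructor
  · intro he
    have := congrFun he i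
    simp [hFlip] at this
  · refine Or.inl ((dc_one_iff _ _).mpr ⟨i, ?_, ?_⟩)
    · simp [hFlip]
    · intro k hk; simp [hFlip, hk]

lemma adjA {u v : Fin n → Bool} {i j : Fin n} (hij : i ≠ j) (hi : u i ≠ v i)
    (hj : u j ≠ v j) (hrest : ∀ k, k ≠ i → k ≠ j → u k = v k) :
    (FQn n).Adj v (hFlip u i) := by
  rw [FQn_adj]
  have hji : j ≠ i := Ne.symm hij
  constructor
  · intro he
    have := congrFun he j
    rw [hFlip, if_neg hji] at this
    exact hj this.symm
  · refine Or.inl ((dc_one_iff _ _).mpr ⟨j, ?_, ?_⟩)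
    · rw [hFlip]; simp only [if_neg hji]
      exact fun hh => hj hh.symm
    · intro k hk
      by_cases hki : k = i
      · subst hki
        rw [hFlip, if_pos rfl, ← bool_ne_iff.mp hi]
      · rw [hFlip, if_neg hki, hrest k hki hk]

lemma adj_bcompl (hn : 1 ≤ n) (u : Fin n → Bool) : (FQn n).Adj u (bcompl u) := by
  rw [FQn_adj]
  constructor
  · intro he
    have := congrFun he ⟨0, hn⟩
    simp [bcompl] at this
  · exact Or.inr ((dc_n_iff _ _).mpr (fun i => by simp [bcompl]))

lemma adjB {u v : Fin n → Bool} {i0 : Fin n} (h0 : u i0 = v i0)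
    (hrest : ∀ k, k ≠ i0 → u k ≠ v k) : (FQn n).Adj u (bcompl v) := by
  rw [FQn_adj]
  constructor
  · intro he
    have := congrFun he i0
    rw [bcompl, h0] at this
    simp at this
  · refine Or.inl ((dc_one_iff _ _).mpr ⟨i0, ?_, ?_⟩)
    · rw [bcompl, h0]; simp
    · intro k hk
      rw [bcompl]
      exact bool_ne_iff'.mp (hrest k hk)

/-- Case A: `u` and `v` differ in exactly two coordinates. -/
lemma caseA (hn : 4 ≤ n) {u v : Fin n → Bool} (huv : u ≠ v) {i j : Fin n}
    (hij : i ≠ j) (hi : u i ≠ v i) (hj : u j ≠ v j)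
    (hrest : ∀ k, k ≠ i → k ≠ j → u k = v k) :
    ((FQn n).neighborSet u ∩ (FQn n).neighborSet v).ncard = 2 := by
  have hset : (FQn n).neighborSet u ∩ (FQn n).neighborSet v
      = {hFlip u i, hFlip u j} := by
    ext w
    simp only [Set.mem_inter_iff, SimpleGraph.mem_neighborSet, Set.mem_insert_iff,
      Set.mem_singleton_iff]
    constructor
    · rintro ⟨hu, hv⟩
      rw [FQn_adj] at hu hv
      obtain ⟨hu1, hu2⟩ := hu
      obtain ⟨hv1, hv2⟩ := hv
      rcases hu2 with hu2 | hu2 <;> rcases hv2 with hv2 | hv2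
      · obtain ⟨i', j', hij', hi', hj', hrest', hw⟩ := case11 huv hu2 hv2
        have : i' = i ∨ i' = j := by
          by_contra hc; push_neg at hc
          exact hi' (hrest i' hc.1 hc.2)
        rcases this with h | h <;> rw [h] at hw
        · exact Or.inl hw
        · exact Or.inr hw
      · obtain ⟨i', hi'1, hi'2⟩ := (dc_one_iff u w).mp hu2
        have hall := (dc_n_iff v w).mp hv2
        obtain ⟨k, hk1, hk2, hk3⟩ := exists_fresh hn i j i'
        exfalso
        have h1 : u k = w k := hi'2 k hk3
        have h2 : v k ≠ w k := hall k
        have : u k ≠ v k := by rw [h1]; exact fun hh => h2 hh.symm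
        exact this (hrest k hk1 hk2)
      · obtain ⟨i', hi'1, hi'2⟩ := (dc_one_iff v w).mp hv2
        have hall := (dc_n_iff u w).mp hu2
        obtain ⟨k, hk1, hk2, hk3⟩ := exists_fresh hn i j i'
        exfalso
        have h1 : v k = w k := hi'2 k hk3
        have h2 : u k ≠ w k := hall k
        have : u k ≠ v k := by rw [h1]; exact h2
        exact this (hrest k hk1 hk2)
      · exfalso
        apply huv
        funext k
        exact bool_eq_of_ne_ne ((dc_n_iff u w).mp hu2 k) ((dc_n_iff v w).mp hv2 k)
    · rintro (rfl | rfl)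
      · exact ⟨adj_hFlip u i, adjA hij hi hj hrest⟩
      · exact ⟨adj_hFlip u j, adjA hij.symm hj hi (fun k h1 h2 => hrest k h2 h1)⟩
  rw [hset]
  apply Set.ncard_pair
  intro he
  have := congrFun he i
  rw [hFlip, hFlip, if_pos rfl, if_neg hij] at this
  simp at this

/-- Case B: `u` and `v` differ in all but one coordinate. -/
lemma caseB (hn : 4 ≤ n) {u v : Fin n → Bool} {i0 : Fin n} (h0 : u i0 = v i0)
    (hrest : ∀ k, k ≠ i0 → u k ≠ v k) :
    ((FQn n).neighborSet u ∩ (FQn n).neighborSet v).ncard = 2 := by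
  have hn1 : 1 ≤ n := by omega
  have huv : u ≠ v := by
    obtain ⟨k, hk, -, -⟩ := exists_fresh hn i0 i0 i0
    intro he; exact hrest k hk (congrFun he k)
  have hset : (FQn n).neighborSet u ∩ (FQn n).neighborSet v
      = {bcompl u, bcompl v} := by
    ext w
    simp only [Set.mem_inter_iff, SimpleGraph.mem_neighborSet, Set.mem_insert_iff,
      Set.mem_singleton_iff]
    constructor
    · rintro ⟨hu, hv⟩
      rw [FQn_adj] at hu hv
      obtain ⟨hu1, hu2⟩ := hu
      obtain ⟨hv1, hv2⟩ := hv
      rcases hu2 with hu2 | hu2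
      · rcases hv2 with hv2 | hv2
        · exfalso
          obtain ⟨i', j', hij', hi', hj', hrest', hw⟩ := case11 huv hu2 hv2
          obtain ⟨k, hk1, hk2, hk3⟩ := exists_fresh hn i' j' i0
          exact hrest k hk3 (hrest' k hk1 hk2)
        · refine Or.inr ?_
          have hall := (dc_n_iff v w).mp hv2
          funext k
          exact (bool_ne_iff.mp (hall k)).trans rfl
      · refine Or.inl ?_
        have hall := (dc_n_iff u w).mp hu2
        funext k
        exact (bool_ne_iff.mp (hall k)).trans rfl
    · rintro (rfl | rfl)
      · exact ⟨adj_bcompl hn1 u, adjB h0.symm (fun k hk => Ne.symm (hrest k hk))⟩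
      · exact ⟨adjB h0 hrest, adj_bcompl hn1 v⟩
  rw [hset]
  apply Set.ncard_pair
  intro he
  obtain ⟨k, hk, -, -⟩ := exists_fresh hn i0 i0 i0
  have := congrFun he k
  rw [bcompl, bcompl] at this
  exact hrest k hk (by simpa using this)

end Main

/-- in `FQ_n` (`n ≥ 4`) any two distinct vertices with a common neighbour
have exactly two common neighbours. -/
theorem stmt1 (n : ℕ) (hn : 4 ≤ n) (u v : Fin n → Bool) (huv : u ≠ v)
    (h : ((FQn n).neighborSet u ∩ (FQn n).neighborSet v).Nonempty) :
    ((FQn n).neighborSet u ∩ (FQn n).neighborSet v).ncard = 2 := by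
  obtain ⟨w0, hw0u, hw0v⟩ := h
  rw [SimpleGraph.mem_neighborSet, FQn_adj] at hw0u hw0v
  obtain ⟨hu1, hu2⟩ := hw0u
  obtain ⟨hv1, hv2⟩ := hw0v
  rcases hu2 with hu2 | hu2 <;> rcases hv2 with hv2 | hv2
  · obtain ⟨i, j, hij, hi, hj, hrest, -⟩ := case11 huv hu2 hv2
    exact caseA hn huv hij hi hj hrest
  · obtain ⟨i, hi1, hi2⟩ := (dc_one_iff u w0).mp hu2
    have hall := (dc_n_iff v w0).mp hv2
    refine caseB hn (i0 := i) (bool_eq_of_ne_ne hi1 (hall i)) ?_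
    intro k hk
    rw [hi2 k hk]
    exact fun hh => hall k hh.symm
  · obtain ⟨i, hi1, hi2⟩ := (dc_one_iff v w0).mp hv2
    have hall := (dc_n_iff u w0).mp hu2
    refine caseB hn (i0 := i) (bool_eq_of_ne_ne (hall i) hi1) ?_
    intro k hk
    rw [hi2 k hk]
    exact hall k
  · exfalso
    apply huv
    funext k
    exact bool_eq_of_ne_ne ((dc_n_iff u w0).mp hu2 k) ((dc_n_iff v w0).mp hv2 k)
end

section
/- Let K_{1,m} be a star subgraph of FQ_n with n ≥ 5 and 2 ≤ m ≤ n+1, and let C be a connected subgraph of FQ_n vertex-disjoint from K_{1,m} with |V(C)| = k ≥ 2. Then the number of vertices of K_{1,m} that are adjacent in FQ_n to some vertex of C is at most 2(k−1). -/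
namespace Stmt6Aux

variable {n : ℕ}


def Dset (x y : Fin n → Bool) : Finset (Fin n) :=
  Finset.univ.filter fun i => x i ≠ y i

lemma diffCount_eq (x y : Fin n → Bool) : diffCount x y = (Dset x y).card := rfl

lemma Dset_symmDiff (x y z : Fin n → Bool) :
    Dset x z = symmDiff (Dset x y) (Dset y z) := by
  ext i
  simp only [Dset, Finset.mem_filter, Finset.mem_univ, true_and, Finset.mem_symmDiff]
  cases x i <;> cases y i <;> cases z i <;> simp

lemma symmDiff_card (A B : Finset (Fin n)) :
    (symmDiff A B).card + 2 * (A ∩ B).card = A.card + B.card := by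
  have h1 := Finset.card_union_add_card_inter A B
  have h2 : symmDiff A B = (A ∪ B) \ (A ∩ B) := by
    rw [symmDiff_eq_sup_sdiff_inf, Finset.sup_eq_union, Finset.inf_eq_inter]
  have h3 : (symmDiff A B).card = (A ∪ B).card - (A ∩ B).card := by
    rw [h2, Finset.card_sdiff_of_subset (Finset.inter_subset_union)]
  have h4 : (A ∩ B).card ≤ (A ∪ B).card :=
    Finset.card_le_card Finset.inter_subset_union
  omega

lemma d_tri (x y z : Fin n → Bool) : diffCount x z ≤ diffCount x y + diffCount y z := by
  have h := symmDiff_card (Dset x y) (Dset y z)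
  rw [diffCount_eq, diffCount_eq, diffCount_eq, Dset_symmDiff x y z]
  omega

lemma d_par (x y z : Fin n → Bool) :
    diffCount x z % 2 = (diffCount x y + diffCount y z) % 2 := by
  have h := symmDiff_card (Dset x y) (Dset y z)
  rw [diffCount_eq, diffCount_eq, diffCount_eq, Dset_symmDiff x y z]
  omega

lemma d_eq_zero {x y : Fin n → Bool} (h : diffCount x y = 0) : x = y := by
  rw [diffCount_eq, Finset.card_eq_zero] at h
  funext i
  have := Finset.eq_empty_iff_forall_notMem.mp h i
  simp only [Dset, Finset.mem_filter, Finset.mem_univ, true_and] at this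
  cases hx : x i <;> cases hy : y i <;> simp_all

lemma d_full {x y : Fin n → Bool} (h : diffCount x y = n) : ∀ i, x i ≠ y i := by
  rw [diffCount_eq] at h
  have : Dset x y = Finset.univ := Finset.eq_univ_of_card _ (by simp [h])
  intro i
  have := Finset.eq_univ_iff_forall.mp this i
  simp only [Dset, Finset.mem_filter, Finset.mem_univ, true_and] at this
  exact this

lemma d_compl_sum {x y : Fin n → Bool} (h : diffCount x y = n) (z : Fin n → Bool) :
    diffCount x z + diffCount y z = n := by
  have hfull := d_full h
  have hD : Dset x z = (Dset y z)ᶜ := by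
    ext i
    have hi := hfull i
    simp only [Dset, Finset.mem_filter, Finset.mem_univ, true_and, Finset.mem_compl]
    revert hi
    cases x i <;> cases y i <;> cases z i <;> simp
  have hle : (Dset y z).card ≤ n := by
    simpa using Finset.card_le_univ (Dset y z)
  rw [diffCount_eq, diffCount_eq, hD, Finset.card_compl]
  simp only [Fintype.card_fin]
  omega

lemma d_compl_eq {x y z : Fin n → Bool} (hxy : diffCount x y = n)
    (hyz : diffCount y z = n) : x = z := by
  have h1 := d_full hxy
  have h2 := d_full hyz
  funext i
  have e1 := h1 i; have e2 := h2 i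
  cases hx : x i <;> cases hy : y i <;> cases hz : z i <;> simp_all

lemma eq_of_Dset {u w w' : Fin n → Bool} (h : Dset u w = Dset u w') : w = w' := by
  funext i
  have := Finset.ext_iff.mp h i
  simp only [Dset, Finset.mem_filter, Finset.mem_univ, true_and] at this
  cases hu : u i <;> cases hw : w i <;> cases hw' : w' i <;> simp_all


lemma adj_iff {x y : Fin n → Bool} :
    (FQn n).Adj x y ↔ x ≠ y ∧ (diffCount x y = 1 ∨ diffCount x y = n) := Iff.rfl

lemma d_pos {x y : Fin n → Bool} (h : x ≠ y) : diffCount x y ≠ 0 :=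
  fun h0 => h (d_eq_zero h0)

lemma tri_free (hn : 3 ≤ n) {x y z : Fin n → Bool} (hxy : (FQn n).Adj x y)
    (hyz : (FQn n).Adj y z) (hxz : (FQn n).Adj x z) : False := by
  obtain ⟨nxy, dxy⟩ := hxy
  obtain ⟨nyz, dyz⟩ := hyz
  obtain ⟨nxz, dxz⟩ := hxz
  rcases dxy with h | h
  · rcases dyz with h' | h'
    · have p := d_par x y z
      have t := d_tri x y z
      have := d_pos nxz
      omega
    · have hs := d_compl_sum h' x
      rw [diffCount_comm y x, diffCount_comm z x] at hs
      omega
  · have hs := d_compl_sum h z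
    omega

set_option maxHeartbeats 1000000 in
lemma c5_free (hn : 5 ≤ n) {v0 v1 v2 v3 v4 : Fin n → Bool}
    (h02 : v0 ≠ v2) (h13 : v1 ≠ v3) (h24 : v2 ≠ v4) (h30 : v3 ≠ v0) (h41 : v4 ≠ v1)
    (e0 : (FQn n).Adj v0 v1) (e1 : (FQn n).Adj v1 v2) (e2 : (FQn n).Adj v2 v3)
    (e3 : (FQn n).Adj v3 v4) (e4 : (FQn n).Adj v0 v4) : False := by
  obtain ⟨-, d0⟩ := e0
  obtain ⟨-, d1⟩ := e1
  obtain ⟨-, d2⟩ := e2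
  obtain ⟨-, d3⟩ := e3
  obtain ⟨-, d4⟩ := e4
  have n01 : ¬(diffCount v0 v1 = n ∧ diffCount v1 v2 = n) := fun ⟨a, b⟩ =>
    h02 (d_compl_eq a b)
  have n12 : ¬(diffCount v1 v2 = n ∧ diffCount v2 v3 = n) := fun ⟨a, b⟩ =>
    h13 (d_compl_eq a b)
  have n23 : ¬(diffCount v2 v3 = n ∧ diffCount v3 v4 = n) := fun ⟨a, b⟩ =>
    h24 (d_compl_eq a b)
  have n34 : ¬(diffCount v3 v4 = n ∧ diffCount v0 v4 = n) := fun ⟨a, b⟩ =>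
    h30 (d_compl_eq a (by rw [diffCount_comm]; exact b))
  have n40 : ¬(diffCount v0 v4 = n ∧ diffCount v0 v1 = n) := fun ⟨a, b⟩ =>
    h41 (d_compl_eq (by rw [diffCount_comm]; exact a) b)
  have p1 := d_par v0 v1 v2
  have p2 := d_par v0 v2 v3
  have p3 := d_par v0 v3 v4
  have t1 := d_tri v0 v1 v2
  have t2 := d_tri v0 v2 v3
  have t3 := d_tri v0 v3 v4
  have r1 : diffCount v1 v2 ≤ diffCount v0 v1 + diffCount v0 v2 := by
    have := d_tri v1 v0 v2; rwa [diffCount_comm v1 v0] at this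
  have r2 : diffCount v2 v3 ≤ diffCount v0 v2 + diffCount v0 v3 := by
    have := d_tri v2 v0 v3; rwa [diffCount_comm v2 v0] at this
  have r3 : diffCount v3 v4 ≤ diffCount v0 v3 + diffCount v0 v4 := by
    have := d_tri v3 v0 v4; rwa [diffCount_comm v3 v0] at this
  have s1 : diffCount v0 v1 ≤ diffCount v0 v2 + diffCount v1 v2 := by
    have := d_tri v0 v2 v1; rwa [diffCount_comm v2 v1] at this
  have s2 : diffCount v0 v2 ≤ diffCount v0 v3 + diffCount v2 v3 := by
    have := d_tri v0 v3 v2; rwa [diffCount_comm v3 v2] at this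
  have s3 : diffCount v0 v3 ≤ diffCount v0 v4 + diffCount v3 v4 := by
    have := d_tri v0 v4 v3; rwa [diffCount_comm v4 v3] at this
  clear h02 h13 h24 h30 h41
  generalize diffCount v0 v1 = A at *
  generalize diffCount v1 v2 = B at *
  generalize diffCount v2 v3 = Cc at *
  generalize diffCount v3 v4 = D at *
  generalize diffCount v0 v4 = E at *
  generalize diffCount v0 v2 = a2 at *
  generalize diffCount v0 v3 = a3 at *
  rcases d0 with rfl | rfl <;> rcases d1 with rfl | rfl <;> rcases d2 with rfl | rfl <;>
    rcases d3 with rfl | rfl <;> rcases d4 with rfl | rfl <;> omega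

set_option maxHeartbeats 1000000 in
lemma common_le_two (hn : 5 ≤ n) {u v w1 w2 w3 : Fin n → Bool} (huv : u ≠ v)
    (h12 : w1 ≠ w2) (h13 : w1 ≠ w3) (h23 : w2 ≠ w3)
    (a1 : (FQn n).Adj u w1) (b1 : (FQn n).Adj v w1)
    (a2 : (FQn n).Adj u w2) (b2 : (FQn n).Adj v w2)
    (a3 : (FQn n).Adj u w3) (b3 : (FQn n).Adj v w3) : False := by
  -- no (n,n) type
  have keyNN : ∀ w : Fin n → Bool, diffCount u w = n → diffCount v w = n → False := by
    intro w hu hv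
    exact huv (d_compl_eq hu (by rw [diffCount_comm]; exact hv))
  -- two vertices can't both be at distance n from the same point
  have keyU : ∀ w w' : Fin n → Bool, w ≠ w' →
      diffCount u w = n → diffCount u w' = n → False := by
    intro w w' hne hw hw'
    exact hne (d_compl_eq (by rw [diffCount_comm]; exact hw) hw')
  have keyV : ∀ w w' : Fin n → Bool, w ≠ w' →
      diffCount v w = n → diffCount v w' = n → False := by
    intro w w' hne hw hw'
    exact hne (d_compl_eq (by rw [diffCount_comm]; exact hw) hw')
  -- from a (1,1) common neighbour, d(u,v) = 2
  have duv2 : ∀ w : Fin n → Bool, diffCount u w = 1 → diffCount v w = 1 →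
      diffCount u v = 2 := by
    intro w hu hv
    have p := d_par u w v
    have t := d_tri u w v
    have hwv : diffCount w v = 1 := by rw [diffCount_comm]; exact hv
    have := d_pos huv
    omega
  -- given d(u,v) = 2, no common neighbour has an n-distance
  have no_n : diffCount u v = 2 → ∀ w : Fin n → Bool,
      ((FQn n).Adj u w) → ((FQn n).Adj v w) →
      diffCount u w = 1 ∧ diffCount v w = 1 := by
    intro h2 w hu hv
    obtain ⟨-, du⟩ := hu
    obtain ⟨-, dv⟩ := hv
    rcases du with du | du
    · rcases dv with dv | dv
      · exact ⟨du, dv⟩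
      · have := d_compl_sum dv u
        rw [diffCount_comm v u, diffCount_comm w u] at this
        omega
    · have := d_compl_sum du v
      rw [diffCount_comm w v] at this
      rcases dv with dv | dv
      · omega
      · exact absurd (keyNN w du dv) id
  -- main case analysis: find a (1,1) common neighbour
  have main : diffCount u v = 2 := by
    rcases a1.2 with d1 | d1
    · rcases b1.2 with e1 | e1
      · exact duv2 w1 d1 e1
      · -- w1 is (1,n); examine w2
        rcases b2.2 with e2 | e2
        · rcases a2.2 with d2 | d2
          · exact duv2 w2 d2 e2
          · -- w2 is (n,1); examine w3
            rcases a3.2 with d3 | d3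
            · rcases b3.2 with e3 | e3
              · exact duv2 w3 d3 e3
              · exact absurd (keyV w1 w3 h13 e1 e3) id
            · exact absurd (keyU w2 w3 h23 d2 d3) id
        · exact absurd (keyV w1 w2 h12 e1 e2) id
    · -- w1 is (n,?)
      rcases b1.2 with e1 | e1
      · -- w1 is (n,1); examine w2
        rcases a2.2 with d2 | d2
        · rcases b2.2 with e2 | e2
          · exact duv2 w2 d2 e2
          · -- w2 is (1,n); examine w3
            rcases a3.2 with d3 | d3
            · rcases b3.2 with e3 | e3
              · exact duv2 w3 d3 e3
              · exact absurd (keyV w2 w3 h23 e2 e3) id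
            · exact absurd (keyU w1 w3 h13 d1 d3) id
        · exact absurd (keyU w1 w2 h12 d1 d2) id
      · exact absurd (keyNN w1 d1 e1) id
  -- now all three common neighbours are (1,1)
  obtain ⟨du1, dv1⟩ := no_n main w1 a1 b1
  obtain ⟨du2, dv2⟩ := no_n main w2 a2 b2
  obtain ⟨du3, dv3⟩ := no_n main w3 a3 b3
  -- D(u,wi) is a singleton contained in D(u,v), which has two elements
  have hsub : ∀ w : Fin n → Bool, diffCount u w = 1 → diffCount v w = 1 →
      Dset u w ⊆ Dset u v := by
    intro w hu hv
    have hid := Dset_symmDiff u w v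
    have hcard := symmDiff_card (Dset u w) (Dset w v)
    rw [← hid] at hcard
    rw [diffCount_eq] at hu main
    have hwv : diffCount w v = 1 := by rw [diffCount_comm]; exact hv
    rw [diffCount_eq] at hwv
    have hint : (Dset u w ∩ Dset w v).card = 0 := by omega
    have hdisj : Disjoint (Dset u w) (Dset w v) :=
      Finset.disjoint_iff_inter_eq_empty.mpr (Finset.card_eq_zero.mp hint)
    rw [hid, hdisj.symmDiff_eq_sup]
    exact Finset.subset_union_left
  obtain ⟨p, q, hpq, hDuv⟩ := Finset.card_eq_two.mp
    (by rw [← diffCount_eq]; exact main : (Dset u v).card = 2)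
  have getm : ∀ w : Fin n → Bool, diffCount u w = 1 → diffCount v w = 1 →
      ∃ a, Dset u w = {a} ∧ (a = p ∨ a = q) := by
    intro w hu hv
    obtain ⟨a, ha⟩ := Finset.card_eq_one.mp (by rw [← diffCount_eq]; exact hu)
    refine ⟨a, ha, ?_⟩
    have : a ∈ Dset u v := hsub w hu hv (by rw [ha]; exact Finset.mem_singleton_self a)
    rw [hDuv] at this
    simpa using this
  obtain ⟨a1', hA1, m1⟩ := getm w1 du1 dv1
  obtain ⟨a2', hA2, m2⟩ := getm w2 du2 dv2
  obtain ⟨a3', hA3, m3⟩ := getm w3 du3 dv3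
  have : a1' = a2' ∨ a1' = a3' ∨ a2' = a3' := by
    rcases m1 with e1 | e1 <;> rcases m2 with e2 | e2 <;> rcases m3 with e3 | e3 <;>
      rw [e1, e2, e3] <;> simp
  rcases this with h | h | h
  · exact h12 (eq_of_Dset (by rw [hA1, hA2, h]))
  · exact h13 (eq_of_Dset (by rw [hA1, hA3, h]))
  · exact h23 (eq_of_Dset (by rw [hA2, hA3, h]))



end Stmt6Aux

/-- if `C` is a connected subgraph of `FQ_n` (`n ≥ 5`) on `k ≥ 2` vertices,
vertex-disjoint from a star `K_{1,m}` (`2 ≤ m ≤ n+1`), then at most `2(k-1)` vertices of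
the star are adjacent to some vertex of `C`. -/
theorem stmt6 (n m k : ℕ) (hn : 5 ≤ n) (hm1 : 2 ≤ m) (hm2 : m ≤ n + 1)
    (c : Fin n → Bool) (l : Fin m → Fin n → Bool)
    (hinj : Function.Injective l) (hadj : ∀ i, (FQn n).Adj c (l i))
    (C : Set (Fin n → Bool)) (hconn : ((FQn n).induce C).Connected)
    (hcard : C.ncard = k) (hk : 2 ≤ k)
    (hdisj : ∀ x ∈ C, x ≠ c ∧ ∀ i, x ≠ l i) :
    (({c} ∪ Set.range l) ∩ {w | w ∉ C ∧ ∃ x ∈ C, (FQn n).Adj x w}).ncard ≤ 2 * (k - 1) := by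


  classical
  have hCfin : C.Finite := Set.toFinite C
  set Cf : Finset (Fin n → Bool) := hCfin.toFinset with hCf
  have hmemCf : ∀ {x : Fin n → Bool}, x ∈ Cf ↔ x ∈ C := fun {x} => hCfin.mem_toFinset
  have hCfcard : Cf.card = k := by
    rw [← hcard, Set.ncard_eq_toFinset_card C hCfin]
  set g : (Fin n → Bool) → Finset (Fin n → Bool) :=
    fun x => Finset.univ.filter (fun w => (w = c ∨ ∃ i, w = l i) ∧ (FQn n).Adj x w) with hgdef
  have hmemg : ∀ x w : Fin n → Bool,
      w ∈ g x ↔ ((w = c ∨ ∃ i, w = l i) ∧ (FQn n).Adj x w) := by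
    intro x w; simp [hgdef]
  -- Step 1: the target set is covered by the union of the g x, x ∈ C
  have hsub : ({c} ∪ Set.range l) ∩ {w | w ∉ C ∧ ∃ x ∈ C, (FQn n).Adj x w} ⊆
      ↑(Cf.biUnion g) := by
    rintro w ⟨hw1, -, x, hxC, hxw⟩
    rw [Finset.mem_coe, Finset.mem_biUnion]
    refine ⟨x, hmemCf.mpr hxC, (hmemg x w).mpr ⟨?_, hxw⟩⟩
    simpa [Set.mem_union, Set.mem_range, eq_comm] using hw1
  have step1 : (({c} ∪ Set.range l) ∩ {w | w ∉ C ∧ ∃ x ∈ C, (FQn n).Adj x w}).ncard ≤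
      (Cf.biUnion g).card := by
    have h1 := Set.ncard_le_ncard hsub (Finset.finite_toSet _)
    rwa [Set.ncard_coe_finset] at h1
  have step2 : (Cf.biUnion g).card ≤ ∑ x ∈ Cf, (g x).card := Finset.card_biUnion_le
  -- neighbour extraction from connectivity
  have hnbr : ∀ x0 ∈ C, ∃ y ∈ C, y ≠ x0 ∧ (FQn n).Adj x0 y := by
    intro x0 hx0
    obtain ⟨z, hzC, hzne⟩ := Set.exists_ne_of_one_lt_ncard (s := C) (by omega) x0
    have hreach := hconn.preconnected ⟨x0, hx0⟩ ⟨z, hzC⟩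
    obtain ⟨w⟩ := hreach
    cases w with
    | nil => exact absurd rfl hzne
    | @cons _ b _ h p =>
      exact ⟨↑b, b.2, fun e => ((SimpleGraph.comap_adj.mp h).ne (by simp [e])), 
        SimpleGraph.comap_adj.mp h⟩
  -- bound: every vertex sees at most 2 star vertices
  have hg2 : ∀ x ∈ C, (g x).card ≤ 2 := by
    intro x hx
    by_contra hgt
    obtain ⟨t, hts, ht3⟩ := Finset.exists_subset_card_eq (by omega : 3 ≤ (g x).card)
    obtain ⟨w1, w2, w3, h12, h13, h23, rfl⟩ := Finset.card_eq_three.mp ht3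
    have hw1 := (hmemg x w1).mp (hts (by simp))
    have hw2 := (hmemg x w2).mp (hts (by simp))
    have hw3 := (hmemg x w3).mp (hts (by simp))
    obtain ⟨hs1, ha1⟩ := hw1
    obtain ⟨hs2, ha2⟩ := hw2
    obtain ⟨hs3, ha3⟩ := hw3
    rcases hs1 with rfl | ⟨i1, rfl⟩
    · rcases hs2 with rfl | ⟨i2, rfl⟩
      · exact h12 rfl
      · exact Stmt6Aux.tri_free (by omega) ha1 (hadj i2) ha2
    · rcases hs2 with rfl | ⟨i2, rfl⟩
      · exact Stmt6Aux.tri_free (by omega) ha2 (hadj i1) ha1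
      · rcases hs3 with rfl | ⟨i3, rfl⟩
        · exact Stmt6Aux.tri_free (by omega) ha3 (hadj i1) ha1
        · exact Stmt6Aux.common_le_two hn (hdisj x hx).1 h12 h13 h23 ha1 (hadj i1) ha2 (hadj i2)
            ha3 (hadj i3)
  by_cases hA : ∃ x ∈ C, ∃ i j : Fin m, l i ≠ l j ∧ (FQn n).Adj x (l i) ∧ (FQn n).Adj x (l j)
  · -- some vertex of C has two distinct leaf neighbours
    obtain ⟨x0, hx0, i, j, hij, hxi, hxj⟩ := hA
    obtain ⟨y0, hy0C, hy0ne, hxy⟩ := hnbr x0 hx0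
    have hgy0 : g y0 = ∅ := by
      rw [Finset.eq_empty_iff_forall_notMem]
      intro w hw
      rw [hmemg] at hw
      obtain ⟨hstar, hadjw⟩ := hw
      rcases hstar with rfl | ⟨t, rfl⟩
      · exact Stmt6Aux.common_le_two hn (hdisj x0 hx0).1 hij
          (fun e => (hdisj y0 hy0C).2 i e.symm) (fun e => (hdisj y0 hy0C).2 j e.symm)
          hxi (hadj i) hxj (hadj j) hxy hadjw.symm
      · by_cases hti : l t = l i
        · exact Stmt6Aux.tri_free (by omega) hxy (hti ▸ hadjw) hxi
        · by_cases htj : l t = l j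
          · exact Stmt6Aux.tri_free (by omega) hxy (htj ▸ hadjw) hxj
          · exact Stmt6Aux.c5_free hn ((hdisj y0 hy0C).2 i) (hdisj x0 hx0).1
              (fun e => hti e.symm) (fun e => (hdisj y0 hy0C).1 e.symm)
              (fun e => (hdisj x0 hx0).2 t e.symm)
              hxy.symm hxi (hadj i).symm (hadj t) hadjw
    have hy0f : y0 ∈ Cf := hmemCf.mpr hy0C
    have hsum : ∑ x ∈ Cf, (g x).card ≤ 2 * (k - 1) := by
      rw [← Finset.sum_erase_add Cf _ hy0f, hgy0]
      have hb : ∑ x ∈ Cf.erase y0, (g x).card ≤ (Cf.erase y0).card • 2 := by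
        apply Finset.sum_le_card_nsmul
        intro x hx
        exact hg2 x (hmemCf.mp (Finset.mem_of_mem_erase hx))
      rw [Finset.card_erase_of_mem hy0f, hCfcard, smul_eq_mul] at hb
      simpa using hb.trans (by omega)
    exact step1.trans (step2.trans hsum)
  · -- every vertex of C sees at most one star vertex
    have hg1 : ∀ x ∈ Cf, (g x).card ≤ 1 := by
      intro x hxf
      have hx := hmemCf.mp hxf
      rw [Finset.card_le_one]
      intro a ha b hb
      rw [hmemg] at ha hb
      obtain ⟨hsa, haa⟩ := ha
      obtain ⟨hsb, hab⟩ := hb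
      rcases hsa with rfl | ⟨i, rfl⟩
      · rcases hsb with rfl | ⟨j, rfl⟩
        · rfl
        · exact (Stmt6Aux.tri_free (by omega) haa (hadj j) hab).elim
      · rcases hsb with rfl | ⟨j, rfl⟩
        · exact (Stmt6Aux.tri_free (by omega) hab (hadj i) haa).elim
        · by_contra hne
          exact hA ⟨x, hx, i, j, hne, haa, hab⟩
    have hsum : ∑ x ∈ Cf, (g x).card ≤ 2 * (k - 1) := by
      have hb := Finset.sum_le_card_nsmul Cf _ 1 hg1
      rw [hCfcard, smul_eq_mul] at hb
      omega
    exact step1.trans (step2.trans hsum)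
end

section
/- In the augmented cube AQ_n with n ≥ 3, any two distinct vertices have at most 4 common neighbors. -/
section Aux

variable {n : ℕ}

/-- The six classes of common neighbours. -/
def cHH (u v : Fin n → Bool) : Set (Fin n → Bool) :=
  {w | (∃ i, w = hFlip u i) ∧ (∃ j, w = hFlip v j)}

def cCC (u v : Fin n → Bool) : Set (Fin n → Bool) :=
  {w | (∃ i : Fin n, 1 ≤ i.val ∧ w = cFlip u i) ∧ (∃ j : Fin n, 1 ≤ j.val ∧ w = cFlip v j)}

def cHCs (u v : Fin n → Bool) : Set (Fin n → Bool) :=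
  {w | ∃ i j : Fin n, 1 ≤ j.val ∧ i ≤ j ∧ w = hFlip u i ∧ w = cFlip v j}

def cHCp (u v : Fin n → Bool) : Set (Fin n → Bool) :=
  {w | ∃ i j : Fin n, 1 ≤ j.val ∧ j < i ∧ w = hFlip u i ∧ w = cFlip v j}

lemma cHH_comm (u v : Fin n → Bool) : cHH u v = cHH v u := by
  ext w; exact And.comm

lemma cCC_comm (u v : Fin n → Bool) : cCC u v = cCC v u := by
  ext w; exact And.comm

lemma diff_hFlip (u w : Fin n → Bool) (i : Fin n) (h : w = hFlip u i) :
    ∀ k, (u k ≠ w k) ↔ k = i := by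
  subst h; intro k; simp only [hFlip]
  split <;> simp_all

lemma diff_cFlip (u w : Fin n → Bool) (i : Fin n) (h : w = cFlip u i) :
    ∀ k, (u k ≠ w k) ↔ k ≤ i := by
  subst h; intro k; simp only [cFlip]
  split <;> simp_all

lemma bool_xor : ∀ a b c : Bool, ((a ≠ b) ↔ ¬((a ≠ c) ↔ (b ≠ c))) := by decide

lemma diff_uv {u v w : Fin n → Bool} {P Q : Fin n → Prop}
    (hu : ∀ k, (u k ≠ w k) ↔ P k) (hv : ∀ k, (v k ≠ w k) ↔ Q k) :
    ∀ k, (u k ≠ v k) ↔ ¬(P k ↔ Q k) := by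
  intro k
  rw [bool_xor (u k) (v k) (w k), hu, hv]

lemma not_iff_of_imp {p q : Prop} (h : p → q) : ¬(p ↔ q) ↔ (q ∧ ¬p) := by tauto

lemma not_iff_of_excl {p q : Prop} (h : ¬(p ∧ q)) : ¬(p ↔ q) ↔ (p ∨ q) := by tauto

lemma interval_xor {i j k : Fin n} (h : i < j) : ¬(k ≤ i ↔ k ≤ j) ↔ (i < k ∧ k ≤ j) := by
  constructor
  · intro hn
    by_cases h1 : k ≤ i
    · exact absurd (iff_of_true h1 (h1.trans h.le)) hn
    · refine ⟨not_le.mp h1, ?_⟩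
      by_cases h2 : k ≤ j
      · exact h2
      · exact absurd (iff_of_false h1 h2) hn
  · rintro ⟨h1, h2⟩ hiff
    exact absurd (hiff.mpr h2) (not_le.mpr h1)

/-- Characterization of the difference pattern for `cHCs` members. -/
lemma cHCs_char {u v w : Fin n → Bool} (hw : w ∈ cHCs u v) :
    ∃ i j : Fin n, 1 ≤ j.val ∧ i ≤ j ∧ w = hFlip u i ∧
      ∀ k, (u k ≠ v k) ↔ (k ≤ j ∧ k ≠ i) := by
  obtain ⟨i, j, hj1, hij, hwi, hwj⟩ := hw
  refine ⟨i, j, hj1, hij, hwi, fun k => ?_⟩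
  have hD := diff_uv (diff_hFlip u w i hwi) (diff_cFlip v w j hwj)
  exact (hD k).trans (not_iff_of_imp (fun hk => hk.le.trans hij))

/-- Characterization of the difference pattern for `cHCp` members. -/
lemma cHCp_char {u v w : Fin n → Bool} (hw : w ∈ cHCp u v) :
    ∃ i j : Fin n, 1 ≤ j.val ∧ j < i ∧ w = hFlip u i ∧
      ∀ k, (u k ≠ v k) ↔ (k = i ∨ k ≤ j) := by
  obtain ⟨i, j, hj1, hji, hwi, hwj⟩ := hw
  refine ⟨i, j, hj1, hji, hwi, fun k => ?_⟩
  have hD := diff_uv (diff_hFlip u w i hwi) (diff_cFlip v w j hwj)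
  exact (hD k).trans (not_iff_of_excl (fun hk => absurd (hk.1 ▸ hk.2) (not_le.mpr hji)))

/-- Characterization of the difference pattern for `cHH` members. -/
lemma cHH_char {u v w : Fin n → Bool} (huv : u ≠ v) (hw : w ∈ cHH u v) :
    ∃ i j : Fin n, i ≠ j ∧ w = hFlip u i ∧
      ∀ k, (u k ≠ v k) ↔ (k = i ∨ k = j) := by
  obtain ⟨⟨i, hwi⟩, j, hwj⟩ := hw
  have hD := diff_uv (diff_hFlip u w i hwi) (diff_hFlip v w j hwj)
  have hne : i ≠ j := by
    rintro rfl
    obtain ⟨k, hk⟩ := Function.ne_iff.mp huv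
    exact (hD k).mp hk Iff.rfl
  exact ⟨i, j, hne, hwi, fun k =>
    (hD k).trans (not_iff_of_excl (fun hk => hne (hk.1.symm.trans hk.2)))⟩

/-- Characterization of the difference pattern for `cCC` members. -/
lemma cCC_char {u v w : Fin n → Bool} (huv : u ≠ v) (hw : w ∈ cCC u v) :
    ∃ a b : Fin n, 1 ≤ a.val ∧ a < b ∧ (w = cFlip u a ∨ w = cFlip u b) ∧
      ∀ k, (u k ≠ v k) ↔ (a < k ∧ k ≤ b) := by
  obtain ⟨⟨i, hi1, hwi⟩, j, hj1, hwj⟩ := hw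
  have hD := diff_uv (diff_cFlip u w i hwi) (diff_cFlip v w j hwj)
  have hne : i ≠ j := by
    rintro rfl
    obtain ⟨k, hk⟩ := Function.ne_iff.mp huv
    exact (hD k).mp hk Iff.rfl
  rcases hne.lt_or_gt with h | h
  · exact ⟨i, j, hi1, h, Or.inl hwi, fun k => (hD k).trans (interval_xor h)⟩
  · exact ⟨j, i, hj1, h, Or.inr hwi, fun k =>
      (hD k).trans ((not_congr Iff.comm).trans (interval_xor h))⟩

lemma cHCs_subsingleton (u v : Fin n → Bool) : (cHCs u v).Subsingleton := by
  intro w hw w' hw'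
  obtain ⟨i, j, hj1, hij, hwi, e⟩ := cHCs_char hw
  obtain ⟨i', j', hj1', hij', hwi', e'⟩ := cHCs_char hw'
  have key : ∀ k : Fin n, (k ≤ j ∧ k ≠ i) ↔ (k ≤ j' ∧ k ≠ i') :=
    fun k => (e k).symm.trans (e' k)
  by_cases hii : i = i'
  · rw [hwi, hwi', hii]
  · exfalso
    have n1 : ¬ i ≤ j' := fun h => ((key i).mpr ⟨h, hii⟩).2 rfl
    have n2 : ¬ i' ≤ j := fun h => ((key i').mp ⟨h, Ne.symm hii⟩).2 rfl
    exact n1 ((hij.trans (not_le.mp n2).le).trans hij')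

lemma cHCp_subsingleton (u v : Fin n → Bool) : (cHCp u v).Subsingleton := by
  intro w hw w' hw'
  obtain ⟨i, j, hj1, hji, hwi, e⟩ := cHCp_char hw
  obtain ⟨i', j', hj1', hji', hwi', e'⟩ := cHCp_char hw'
  have key : ∀ k : Fin n, (k = i ∨ k ≤ j) ↔ (k = i' ∨ k ≤ j') :=
    fun k => (e k).symm.trans (e' k)
  by_cases hii : i = i'
  · rw [hwi, hwi', hii]
  · exfalso
    have h1 : i ≤ j' := ((key i).mp (Or.inl rfl)).resolve_left hii
    have h2 : i' ≤ j := ((key i').mpr (Or.inl rfl)).resolve_left (Ne.symm hii)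
    exact absurd ((h1.trans_lt hji').trans_le h2) (lt_asymm hji)

lemma cHH_ncard {u v : Fin n → Bool} (huv : u ≠ v) : (cHH u v).ncard ≤ 2 := by
  rcases (cHH u v).eq_empty_or_nonempty with h | ⟨w₀, hw₀⟩
  · simp [h]
  obtain ⟨i₀, j₀, hne₀, hw₀i, e₀⟩ := cHH_char huv hw₀
  have hsub : cHH u v ⊆ {hFlip u i₀, hFlip u j₀} := by
    intro w hw
    obtain ⟨i, j, hne, hwi, e⟩ := cHH_char huv hw
    have : i = i₀ ∨ i = j₀ := (e₀ i).mp ((e i).mpr (Or.inl rfl))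
    rcases this with rfl | rfl
    · exact Or.inl hwi
    · exact Or.inr hwi
  refine le_trans (Set.ncard_le_ncard hsub (Set.toFinite _)) ?_
  refine le_trans (Set.ncard_insert_le _ _) ?_
  simp

lemma cCC_ncard {u v : Fin n → Bool} (huv : u ≠ v) : (cCC u v).ncard ≤ 2 := by
  rcases (cCC u v).eq_empty_or_nonempty with h | ⟨w₀, hw₀⟩
  · simp [h]
  obtain ⟨a₀, b₀, ha₀1, hab₀, hw₀, e₀⟩ := cCC_char huv hw₀
  have hsub : cCC u v ⊆ {cFlip u a₀, cFlip u b₀} := by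
    intro w hw
    obtain ⟨a, b, ha1, hab, hwab, e⟩ := cCC_char huv hw
    have key : ∀ k : Fin n, (a < k ∧ k ≤ b) ↔ (a₀ < k ∧ k ≤ b₀) :=
      fun k => (e k).symm.trans (e₀ k)
    have ha0b : a₀ < b := ((key b).mp ⟨hab, le_rfl⟩).1
    have hab0 : a < b₀ := ((key b₀).mpr ⟨hab₀, le_rfl⟩).1
    have hb : b = b₀ := le_antisymm ((key b).mp ⟨hab, le_rfl⟩).2
      ((key b₀).mpr ⟨hab₀, le_rfl⟩).2
    have ha : a = a₀ := by
      rcases lt_trichotomy a a₀ with h | h | h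
      · exact absurd ((key a₀).mp ⟨h, ha0b.le⟩).1 (lt_irrefl _)
      · exact h
      · exact absurd ((key a).mpr ⟨h, hab0.le⟩).1 (lt_irrefl _)
    rw [ha, hb] at hwab
    rcases hwab with h | h
    · exact Or.inl h
    · exact Or.inr h
  refine le_trans (Set.ncard_le_ncard hsub (Set.toFinite _)) ?_
  refine le_trans (Set.ncard_insert_le _ _) ?_
  simp

lemma cCC_vs_cHCs (hn : 3 ≤ n) {u v w w' : Fin n → Bool} (huv : u ≠ v)
    (hw : w ∈ cCC u v) (hw' : w' ∈ cHCs u v) : False := by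
  obtain ⟨a, b, ha1, hab, -, e₀⟩ := cCC_char huv hw
  obtain ⟨i, j, hj1, hij, -, e⟩ := cHCs_char hw'
  have h2 : 2 ≤ n := by omega
  set z : Fin n := ⟨0, by omega⟩ with hz
  set o : Fin n := ⟨1, by omega⟩ with ho
  by_cases hi : i = o
  · have hzi : z ≠ i := by
      rw [hi]
      intro h
      have : (0 : ℕ) = 1 := congrArg Fin.val h
      omega
    have hD : u z ≠ v z := (e z).mpr ⟨show (0 : ℕ) ≤ j.val from Nat.zero_le _, hzi⟩
    have hlt : a.val < 0 := ((e₀ z).mp hD).1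
    omega
  · have hoi : o ≠ i := fun h => hi h.symm
    have hD : u o ≠ v o := (e o).mpr ⟨show (1 : ℕ) ≤ j.val from hj1, hoi⟩
    have hlt : a.val < 1 := ((e₀ o).mp hD).1
    omega

lemma cCC_vs_cHCp (hn : 3 ≤ n) {u v w w' : Fin n → Bool} (huv : u ≠ v)
    (hw : w ∈ cCC u v) (hw' : w' ∈ cHCp u v) : False := by
  obtain ⟨a, b, ha1, hab, -, e₀⟩ := cCC_char huv hw
  obtain ⟨i, j, hj1, hji, -, e⟩ := cHCp_char hw'
  set z : Fin n := ⟨0, by omega⟩ with hz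
  have hD : u z ≠ v z := (e z).mpr (Or.inr (show (0 : ℕ) ≤ j.val from Nat.zero_le _))
  have hlt : a.val < 0 := ((e₀ z).mp hD).1
  omega

lemma cHCp_vs_cHH (hn : 3 ≤ n) {u v w w' : Fin n → Bool} (huv : u ≠ v)
    (hw : w ∈ cHCp u v) (hw' : w' ∈ cHH u v) : False := by
  obtain ⟨i, j, hj1, hji, -, e⟩ := cHCp_char hw
  obtain ⟨i₀, j₀, hne₀, -, e₀⟩ := cHH_char huv hw'
  set z : Fin n := ⟨0, by omega⟩ with hz
  set o : Fin n := ⟨1, by omega⟩ with ho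
  have hi2 : 2 ≤ i.val := by
    have hlt : j.val < i.val := hji
    omega
  have f : ∀ k : Fin n, (u k ≠ v k) → k.val = i₀.val ∨ k.val = j₀.val := by
    intro k hk
    rcases (e₀ k).mp hk with h | h
    · exact Or.inl (congrArg Fin.val h)
    · exact Or.inr (congrArg Fin.val h)
  have h1 : (0 : ℕ) = i₀.val ∨ (0 : ℕ) = j₀.val :=
    f z ((e z).mpr (Or.inr (show (0 : ℕ) ≤ j.val from Nat.zero_le _)))
  have h2 : (1 : ℕ) = i₀.val ∨ (1 : ℕ) = j₀.val :=
    f o ((e o).mpr (Or.inr (show (1 : ℕ) ≤ j.val from hj1)))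
  have h3 := f i ((e i).mpr (Or.inl rfl))
  omega

lemma union6_bound {α : Type*} (A B C D E F : Set α) (a b c d e f : ℕ)
    (hA : A.ncard ≤ a) (hB : B.ncard ≤ b) (hC : C.ncard ≤ c)
    (hD : D.ncard ≤ d) (hE : E.ncard ≤ e) (hF : F.ncard ≤ f) :
    (A ∪ B ∪ C ∪ D ∪ E ∪ F).ncard ≤ a + b + c + d + e + f := by
  refine le_trans (Set.ncard_union_le _ _) (add_le_add ?_ hF)
  refine le_trans (Set.ncard_union_le _ _) (add_le_add ?_ hE)
  refine le_trans (Set.ncard_union_le _ _) (add_le_add ?_ hD)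
  refine le_trans (Set.ncard_union_le _ _) (add_le_add ?_ hC)
  exact le_trans (Set.ncard_union_le _ _) (add_le_add hA hB)

lemma cover (u v : Fin n → Bool) :
    (AQn n).neighborSet u ∩ (AQn n).neighborSet v ⊆
      cHH u v ∪ cCC u v ∪ cHCs u v ∪ cHCp u v ∪ cHCs v u ∪ cHCp v u := by
  rintro w ⟨hu, hv⟩
  obtain ⟨-, hu⟩ : u ≠ w ∧ ((∃ i, w = hFlip u i) ∨ (∃ i : Fin n, 1 ≤ i.val ∧ w = cFlip u i)) := hu
  obtain ⟨-, hv⟩ : v ≠ w ∧ ((∃ i, w = hFlip v i) ∨ (∃ i : Fin n, 1 ≤ i.val ∧ w = cFlip v i)) := hv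
  simp only [Set.mem_union]
  rcases hu with ⟨i, hi⟩ | ⟨i, hi1, hi⟩ <;> rcases hv with ⟨j, hj⟩ | ⟨j, hj1, hj⟩
  · exact Or.inl (Or.inl (Or.inl (Or.inl (Or.inl ⟨⟨i, hi⟩, ⟨j, hj⟩⟩))))
  · rcases le_or_gt i j with h | h
    · exact Or.inl (Or.inl (Or.inl (Or.inr ⟨i, j, hj1, h, hi, hj⟩)))
    · exact Or.inl (Or.inl (Or.inr ⟨i, j, hj1, h, hi, hj⟩))
  · rcases le_or_gt j i with h | h
    · exact Or.inl (Or.inr ⟨j, i, hi1, h, hj, hi⟩)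
    · exact Or.inr ⟨j, i, hi1, h, hj, hi⟩
  · exact Or.inl (Or.inl (Or.inl (Or.inl (Or.inr ⟨⟨i, hi1, hi⟩, ⟨j, hj1, hj⟩⟩))))

end Aux

/-- in `AQ_n` (`n ≥ 3`) any two distinct vertices have at most 4 common
neighbours. -/
theorem stmt10 (n : ℕ) (hn : 3 ≤ n) (u v : Fin n → Bool) (huv : u ≠ v) :
    ((AQn n).neighborSet u ∩ (AQn n).neighborSet v).ncard ≤ 4 := by
  classical
  have hvu : v ≠ u := Ne.symm huv
  refine le_trans (Set.ncard_le_ncard (cover u v) (Set.toFinite _)) ?_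
  have hs1 : (cHCs u v).ncard ≤ 1 :=
    (Set.ncard_le_one_iff (Set.toFinite _)).mpr (fun ha hb => cHCs_subsingleton u v ha hb)
  have hs2 : (cHCs v u).ncard ≤ 1 :=
    (Set.ncard_le_one_iff (Set.toFinite _)).mpr (fun ha hb => cHCs_subsingleton v u ha hb)
  have hp1 : (cHCp u v).ncard ≤ 1 :=
    (Set.ncard_le_one_iff (Set.toFinite _)).mpr (fun ha hb => cHCp_subsingleton u v ha hb)
  have hp2 : (cHCp v u).ncard ≤ 1 :=
    (Set.ncard_le_one_iff (Set.toFinite _)).mpr (fun ha hb => cHCp_subsingleton v u ha hb)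
  by_cases hCC : (cCC u v).Nonempty
  · obtain ⟨w₀, hw₀⟩ := hCC
    have hw₀' : w₀ ∈ cCC v u := (cCC_comm u v) ▸ hw₀
    have e1 : cHCs u v = ∅ := Set.eq_empty_iff_forall_notMem.mpr
      (fun w' hw' => cCC_vs_cHCs hn huv hw₀ hw')
    have e2 : cHCp u v = ∅ := Set.eq_empty_iff_forall_notMem.mpr
      (fun w' hw' => cCC_vs_cHCp hn huv hw₀ hw')
    have e3 : cHCs v u = ∅ := Set.eq_empty_iff_forall_notMem.mpr
      (fun w' hw' => cCC_vs_cHCs hn hvu hw₀' hw')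
    have e4 : cHCp v u = ∅ := Set.eq_empty_iff_forall_notMem.mpr
      (fun w' hw' => cCC_vs_cHCp hn hvu hw₀' hw')
    have := union6_bound (cHH u v) (cCC u v) (cHCs u v) (cHCp u v) (cHCs v u) (cHCp v u)
      2 2 0 0 0 0
      (cHH_ncard huv) (cCC_ncard huv) (by simp [e1]) (by simp [e2]) (by simp [e3]) (by simp [e4])
    exact le_trans this (by norm_num)
  · have eCC : cCC u v = ∅ := Set.not_nonempty_iff_eq_empty.mp hCC
    by_cases hP : (cHCp u v).Nonempty ∨ (cHCp v u).Nonempty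
    · have eHH : cHH u v = ∅ := by
        rcases hP with ⟨w₀, hw₀⟩ | ⟨w₀, hw₀⟩
        · exact Set.eq_empty_iff_forall_notMem.mpr
            (fun w' hw' => cHCp_vs_cHH hn huv hw₀ hw')
        · exact Set.eq_empty_iff_forall_notMem.mpr
            (fun w' hw' => cHCp_vs_cHH hn hvu hw₀ ((cHH_comm u v) ▸ hw'))
      have := union6_bound (cHH u v) (cCC u v) (cHCs u v) (cHCp u v) (cHCs v u) (cHCp v u)
        0 0 1 1 1 1
        (by simp [eHH]) (by simp [eCC]) hs1 hp1 hs2 hp2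
      exact le_trans this (by norm_num)
    · push_neg at hP
      have e2 : cHCp u v = ∅ := hP.1
      have e4 : cHCp v u = ∅ := hP.2
      have := union6_bound (cHH u v) (cCC u v) (cHCs u v) (cHCp u v) (cHCs v u) (cHCp v u)
        2 0 1 0 1 0
        (cHH_ncard huv) (by simp [eCC]) hs1 (by simp [e2]) hs2 (by simp [e4])
      exact le_trans this (by norm_num)
end

section
/- In AQ_n (n ≥ 2), for a hypercube edge u u^i with 2 ≤ i ≤ n, the common neighbors of u and u^i are exactly {ū^i, ū^{i−1}}, and for i = 1 they are exactly {ū^2, u^2}. -/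
lemma eq_ite_iff' {n : ℕ} (u w : Fin n → Bool) (p : Fin n → Prop) [DecidablePred p] :
    w = (fun m => if p m then !u m else u m) ↔ ∀ m, (w m ≠ u m ↔ p m) := by
  constructor
  · rintro rfl m
    by_cases h : p m <;> simp [h]
  · intro h
    funext m
    by_cases hp : p m
    · simp only [if_pos hp]
      have := (h m).2 hp
      cases hu : u m <;> cases hw : w m <;> simp_all
    · simp only [if_neg hp]
      have : ¬ (w m ≠ u m) := fun hne => hp ((h m).1 hne)
      simpa using this

lemma eq_hFlip_iff {n : ℕ} (u w : Fin n → Bool) (j : Fin n) :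
    w = hFlip u j ↔ ∀ m, (w m ≠ u m ↔ m = j) :=
  eq_ite_iff' u w (fun m => m = j)

lemma eq_cFlip_iff {n : ℕ} (u w : Fin n → Bool) (j : Fin n) :
    w = cFlip u j ↔ ∀ m, (w m ≠ u m ↔ m ≤ j) :=
  eq_ite_iff' u w (fun m => m ≤ j)

lemma hFlip_ne_iff {n : ℕ} (u : Fin n → Bool) (j m : Fin n) :
    hFlip u j m ≠ u m ↔ m = j := by
  by_cases h : m = j <;> simp [hFlip, h]

lemma cFlip_ne_iff {n : ℕ} (u : Fin n → Bool) (j m : Fin n) :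
    cFlip u j m ≠ u m ↔ m ≤ j := by
  by_cases h : m ≤ j <;> simp [cFlip, h]

lemma ne_hFlip_iff {n : ℕ} (u w : Fin n → Bool) (i m : Fin n) :
    (w m ≠ hFlip u i m) ↔ ((w m ≠ u m) ↔ m ≠ i) := by
  by_cases h : m = i <;> simp [hFlip, h]

lemma adj_iff {n : ℕ} (h0 : 0 < n) (u w : Fin n → Bool) :
    (AQn n).Adj u w ↔
      ((∃ j, ∀ m, (w m ≠ u m ↔ m = j)) ∨
       (∃ j : Fin n, 1 ≤ j.val ∧ ∀ m, (w m ≠ u m ↔ m ≤ j))) := by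
  constructor
  · rintro ⟨hne, ⟨j, rfl⟩ | ⟨j, hj, rfl⟩⟩
    · exact Or.inl ⟨j, fun m => hFlip_ne_iff u j m⟩
    · exact Or.inr ⟨j, hj, fun m => cFlip_ne_iff u j m⟩
  · rintro (⟨j, hj⟩ | ⟨j, hj1, hj⟩)
    · refine ⟨fun he => ?_, Or.inl ⟨j, (eq_hFlip_iff u w j).2 hj⟩⟩
      exact ((hj j).2 rfl) (by rw [he])
    · refine ⟨fun he => ?_, Or.inr ⟨j, hj1, (eq_cFlip_iff u w j).2 hj⟩⟩
      exact ((hj ⟨0, h0⟩).2 (by simp [Fin.le_def])) (by rw [he])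


/-- common neighbours across a hypercube edge `u u^i` of `AQ_n` (`n ≥ 2`).
Here `i : Fin n` encodes the (1-based) bit `i+1`; for bit `≥ 2` the common neighbours
are `{ū^i, ū^{i-1}}` and for bit `1` they are `{ū^2, u^2}`. -/
theorem stmt11 (n : ℕ) (hn : 2 ≤ n) (u : Fin n → Bool) (i : Fin n) :
    (AQn n).neighborSet u ∩ (AQn n).neighborSet (hFlip u i) =
      if 1 ≤ i.val then
        {cFlip u i, cFlip u ⟨i.val - 1, Nat.lt_of_le_of_lt (Nat.sub_le _ _) i.isLt⟩}
      else
        {cFlip u ⟨1, hn⟩, hFlip u ⟨1, hn⟩} := by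
  have h0 : 0 < n := by omega
  have hiN := i.isLt
  ext w
  simp only [Set.mem_inter_iff, SimpleGraph.mem_neighborSet, adj_iff h0, ne_hFlip_iff]
  by_cases hi : 1 ≤ i.val
  · rw [if_pos hi]
    simp only [Set.mem_insert_iff, Set.mem_singleton_iff, eq_cFlip_iff]
    constructor
    · rintro ⟨⟨j, hj⟩ | ⟨j, hj1, hj⟩, ⟨k, hk⟩ | ⟨k, hk1, hk⟩⟩
      · exfalso
        have key : ∀ m : Fin n, ((m = j ↔ m ≠ i) ↔ m = k) := fun m => by
          rw [← hj m]; exact hk m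
        have c1 := key i; have c2 := key j; have c3 := key k
        simp only [ne_eq, Fin.ext_iff, Fin.le_def, not_true, not_false_iff, iff_false, false_iff, iff_true, true_iff] at c1 c2 c3
        omega
      · have key : ∀ m : Fin n, ((m = j ↔ m ≠ i) ↔ m ≤ k) := fun m => by
          rw [← hj m]; exact hk m
        have c0 := key ⟨0, h0⟩; have c1 := key ⟨1, hn⟩
        have ci := key i; have cj := key j; have ck := key k
        simp only [ne_eq, Fin.ext_iff, Fin.le_def, not_true, not_false_iff, iff_false, false_iff, iff_true, true_iff] at c0 c1 ci cj ck
        right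
        intro m
        rw [hj m]
        simp only [ne_eq, Fin.ext_iff, Fin.le_def, not_true, not_false_iff, iff_false, false_iff, iff_true, true_iff]
        omega
      · have key : ∀ m : Fin n, ((m ≤ j ↔ m ≠ i) ↔ m = k) := fun m => by
          rw [← hj m]; exact hk m
        have c0 := key ⟨0, h0⟩; have c1 := key ⟨1, hn⟩
        have ci := key i; have cj := key j; have ck := key k
        simp only [ne_eq, Fin.ext_iff, Fin.le_def, not_true, not_false_iff, iff_false, false_iff, iff_true, true_iff] at c0 c1 ci cj ck
        left
        intro m
        rw [hj m]
        simp only [ne_eq, Fin.ext_iff, Fin.le_def, not_true, not_false_iff, iff_false, false_iff, iff_true, true_iff]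
        omega
      · have key : ∀ m : Fin n, ((m ≤ j ↔ m ≠ i) ↔ m ≤ k) := fun m => by
          rw [← hj m]; exact hk m
        by_cases hab : i ≤ j
        · have ci := key i; have cj := key j; have ck := key k
          simp only [ne_eq, Fin.ext_iff, Fin.le_def, not_true, not_false_iff, iff_false, false_iff, iff_true, true_iff] at ci cj ck hab
          have hki : k.val < i.val := by omega
          have c4 := key ⟨k.val + 1, by omega⟩
          simp only [ne_eq, Fin.ext_iff, Fin.le_def, not_true, not_false_iff, iff_false, false_iff, iff_true, true_iff] at c4
          left
          intro m
          rw [hj m]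
          simp only [ne_eq, Fin.ext_iff, Fin.le_def, not_true, not_false_iff, iff_false, false_iff, iff_true, true_iff]
          omega
        · have ci := key i; have cj := key j; have ck := key k
          simp only [ne_eq, Fin.ext_iff, Fin.le_def, not_true, not_false_iff, iff_false, false_iff, iff_true, true_iff] at ci cj ck hab
          have c4 := key ⟨j.val + 1, by omega⟩
          simp only [ne_eq, Fin.ext_iff, Fin.le_def, not_true, not_false_iff, iff_false, false_iff, iff_true, true_iff] at c4
          right
          intro m
          rw [hj m]
          simp only [ne_eq, Fin.ext_iff, Fin.le_def, not_true, not_false_iff, iff_false, false_iff, iff_true, true_iff]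
          omega
    · rintro (hw | hw)
      · refine ⟨Or.inr ⟨i, hi, hw⟩, ?_⟩
        by_cases hi2 : 2 ≤ i.val
        · refine Or.inr ⟨⟨i.val - 1, by omega⟩, by simp; omega, fun m => ?_⟩
          rw [hw m]
          simp only [ne_eq, Fin.ext_iff, Fin.le_def, not_true, not_false_iff, iff_false, false_iff, iff_true, true_iff]
          omega
        · refine Or.inl ⟨⟨0, h0⟩, fun m => ?_⟩
          rw [hw m]
          simp only [ne_eq, Fin.ext_iff, Fin.le_def, not_true, not_false_iff, iff_false, false_iff, iff_true, true_iff]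
          omega
      · refine ⟨?_, Or.inr ⟨i, hi, fun m => ?_⟩⟩
        · by_cases hi2 : 2 ≤ i.val
          · exact Or.inr ⟨⟨i.val - 1, by omega⟩, by simp; omega, hw⟩
          · refine Or.inl ⟨⟨0, h0⟩, fun m => ?_⟩
            rw [hw m]
            simp only [ne_eq, Fin.ext_iff, Fin.le_def, not_true, not_false_iff, iff_false, false_iff, iff_true, true_iff]
            omega
        · rw [hw m]
          simp only [ne_eq, Fin.ext_iff, Fin.le_def, not_true, not_false_iff, iff_false, false_iff, iff_true, true_iff]
          omega
  · rw [if_neg hi]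
    simp only [Set.mem_insert_iff, Set.mem_singleton_iff, eq_cFlip_iff, eq_hFlip_iff]
    constructor
    · rintro ⟨⟨j, hj⟩ | ⟨j, hj1, hj⟩, ⟨k, hk⟩ | ⟨k, hk1, hk⟩⟩
      · exfalso
        have key : ∀ m : Fin n, ((m = j ↔ m ≠ i) ↔ m = k) := fun m => by
          rw [← hj m]; exact hk m
        have c1 := key i; have c2 := key j; have c3 := key k
        simp only [ne_eq, Fin.ext_iff, Fin.le_def, not_true, not_false_iff, iff_false, false_iff, iff_true, true_iff] at c1 c2 c3
        omega
      · have key : ∀ m : Fin n, ((m = j ↔ m ≠ i) ↔ m ≤ k) := fun m => by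
          rw [← hj m]; exact hk m
        have c0 := key ⟨0, h0⟩; have c1 := key ⟨1, hn⟩
        have ci := key i; have cj := key j; have ck := key k
        simp only [ne_eq, Fin.ext_iff, Fin.le_def, not_true, not_false_iff, iff_false, false_iff, iff_true, true_iff] at c0 c1 ci cj ck
        right
        intro m
        rw [hj m]
        simp only [ne_eq, Fin.ext_iff, Fin.le_def, not_true, not_false_iff, iff_false, false_iff, iff_true, true_iff]
        omega
      · have key : ∀ m : Fin n, ((m ≤ j ↔ m ≠ i) ↔ m = k) := fun m => by
          rw [← hj m]; exact hk m
        have c0 := key ⟨0, h0⟩; have c1 := key ⟨1, hn⟩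
        have ci := key i; have cj := key j; have ck := key k
        simp only [ne_eq, Fin.ext_iff, Fin.le_def, not_true, not_false_iff, iff_false, false_iff, iff_true, true_iff] at c0 c1 ci cj ck
        left
        intro m
        rw [hj m]
        simp only [ne_eq, Fin.ext_iff, Fin.le_def, not_true, not_false_iff, iff_false, false_iff, iff_true, true_iff]
        omega
      · exfalso
        have key : ∀ m : Fin n, ((m ≤ j ↔ m ≠ i) ↔ m ≤ k) := fun m => by
          rw [← hj m]; exact hk m
        have c0 := key ⟨0, h0⟩
        simp only [ne_eq, Fin.ext_iff, Fin.le_def, not_true, not_false_iff, iff_false, false_iff, iff_true, true_iff] at c0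
        omega
    · rintro (hw | hw)
      · refine ⟨Or.inr ⟨⟨1, hn⟩, le_refl _, hw⟩, Or.inl ⟨⟨1, hn⟩, fun m => ?_⟩⟩
        rw [hw m]
        simp only [ne_eq, Fin.ext_iff, Fin.le_def, not_true, not_false_iff, iff_false, false_iff, iff_true, true_iff]
        omega
      · refine ⟨Or.inl ⟨⟨1, hn⟩, hw⟩, Or.inr ⟨⟨1, hn⟩, le_refl _, fun m => ?_⟩⟩
        rw [hw m]
        simp only [ne_eq, Fin.ext_iff, Fin.le_def, not_true, not_false_iff, iff_false, false_iff, iff_true, true_iff]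
        omega
end

section
/- In AQ_n (n ≥ 2), if two vertices u, w of the same half AQ_{n−1}^i (same leading bit) have a common neighbor in the other half AQ_{n−1}^{1−i}, then w = ū^{n−1} (u with bits 1,…,n−1 flipped), and u and w have exactly two common neighbors in the other half, namely u^n and ū^n. -/
lemma hFlip_ne {n : ℕ} (u : Fin n → Bool) (i : Fin n) : hFlip u i ≠ u := by
  intro h
  have := congrFun h i
  simp [hFlip] at this

lemma cFlip_ne {n : ℕ} (u : Fin n → Bool) (i : Fin n) : cFlip u i ≠ u := by
  intro h
  have := congrFun h i
  simp [cFlip] at this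

lemma cross_key {n : ℕ} (a : Fin n) (ha : a.val = n - 1) (v z : Fin n → Bool)
    (hz : z a ≠ v a) (hadj : (AQn n).Adj v z) : z = hFlip v a ∨ z = cFlip v a := by
  rcases hadj.2 with ⟨i, rfl⟩ | ⟨i, _, rfl⟩
  · left
    have hia : a = i := by
      by_contra h
      exact hz (by simp only [hFlip, if_neg h])
    rw [← hia]
  · right
    have hia : i = a := by
      have h1 : i.val < n := i.isLt
      rcases lt_or_eq_of_le (show i.val ≤ a.val by omega) with h | h
      · exact absurd (by simp only [cFlip, if_neg (by rw [Fin.le_def]; omega : ¬ a ≤ i)]) hz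
      · exact Fin.ext h
    rw [hia]

lemma comp1 {n : ℕ} (hn : 2 ≤ n) (a b : Fin n) (ha : a.val = n - 1) (hb : b.val = n - 2)
    (u : Fin n → Bool) : cFlip (hFlip u a) a = cFlip u b := by
  funext j
  have hj : j.val < n := j.isLt
  simp only [cFlip, hFlip, Fin.le_def, Fin.ext_iff, ha, hb]
  split_ifs
  all_goals try rfl
  all_goals try simp
  all_goals omega

lemma comp2 {n : ℕ} (hn : 2 ≤ n) (a b : Fin n) (ha : a.val = n - 1) (hb : b.val = n - 2)
    (u : Fin n → Bool) : hFlip (cFlip u a) a = cFlip u b := by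
  funext j
  have hj : j.val < n := j.isLt
  simp only [cFlip, hFlip, Fin.le_def, Fin.ext_iff, ha, hb]
  split_ifs
  all_goals try rfl
  all_goals try simp
  all_goals omega

theorem stmt13_aux {n : ℕ} (hn : 2 ≤ n) (a b : Fin n) (ha : a.val = n - 1)
    (hb : b.val = n - 2) (u w : Fin n → Bool) (hne : u ≠ w) (hsame : u a = w a)
    (hcn : ∃ z, z a ≠ u a ∧ (AQn n).Adj u z ∧ (AQn n).Adj w z) :
    w = cFlip u b ∧
    {z | z a ≠ u a} ∩ (AQn n).neighborSet u ∩ (AQn n).neighborSet w =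
      {hFlip u a, cFlip u a} := by
  have ha1 : 1 ≤ a.val := by omega
  obtain ⟨z, hz, huz, hwz⟩ := hcn
  have hz' : z a ≠ w a := hsame ▸ hz
  have hw : w = cFlip u b := by
    rcases cross_key a ha u z hz huz with rfl | rfl
    · rcases cross_key a ha w _ hz' hwz with h | h
      · exact absurd (by rw [← hFlip_hFlip u a, h, hFlip_hFlip]) hne
      · rw [← cFlip_cFlip w a, ← h, comp1 hn a b ha hb]
    · rcases cross_key a ha w _ hz' hwz with h | h
      · rw [← hFlip_hFlip w a, ← h, comp2 hn a b ha hb]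
      · exact absurd (by rw [← cFlip_cFlip u a, h, cFlip_cFlip]) hne
  refine ⟨hw, ?_⟩
  have e1 : hFlip w a = cFlip u a := by
    rw [hw, ← comp2 hn a b ha hb u, hFlip_hFlip]
  have e2 : cFlip w a = hFlip u a := by
    rw [hw, ← comp1 hn a b ha hb u, cFlip_cFlip]
  ext x
  simp only [Set.mem_inter_iff, Set.mem_setOf_eq, SimpleGraph.mem_neighborSet,
    Set.mem_insert_iff, Set.mem_singleton_iff]
  constructor
  · rintro ⟨⟨hx, hux⟩, hwx⟩
    exact cross_key a ha u x hx hux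
  · rintro (rfl | rfl)
    · refine ⟨⟨?_, (hFlip_ne u a).symm, Or.inl ⟨a, rfl⟩⟩, ?_⟩
      · simp [hFlip]
      · rw [← e2]
        exact ⟨(cFlip_ne w a).symm, Or.inr ⟨a, ha1, rfl⟩⟩
    · refine ⟨⟨?_, (cFlip_ne u a).symm, Or.inr ⟨a, ha1, rfl⟩⟩, ?_⟩
      · simp [cFlip]
      · rw [← e1]
        exact ⟨(hFlip_ne w a).symm, Or.inl ⟨a, rfl⟩⟩

/-- if two vertices of the same half of `AQ_n` (same leading bit) have a
common neighbour in the other half, then `w = ū^{n-1}` and their common neighbours in the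
other half are exactly `u^n` and `ū^n`. -/
theorem stmt13 (n : ℕ) (hn : 2 ≤ n) (u w : Fin n → Bool) (hne : u ≠ w)
    (hsame : u ⟨n - 1, by omega⟩ = w ⟨n - 1, by omega⟩)
    (hcn : ∃ z, z ⟨n - 1, by omega⟩ ≠ u ⟨n - 1, by omega⟩ ∧
      (AQn n).Adj u z ∧ (AQn n).Adj w z) :
    w = cFlip u ⟨n - 2, by omega⟩ ∧
    {z | z ⟨n - 1, by omega⟩ ≠ u ⟨n - 1, by omega⟩} ∩
        (AQn n).neighborSet u ∩ (AQn n).neighborSet w =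
      {hFlip u ⟨n - 1, by omega⟩, cFlip u ⟨n - 1, by omega⟩} := by
  exact stmt13_aux hn ⟨n - 1, by omega⟩ ⟨n - 2, by omega⟩ rfl rfl u w hne hsame hcn
end

section
/- In AQ_n (n ≥ 3), for two hypercube edges u u^i and u u^j with 1 ≤ i < j ≤ n, the vertices u^i and u^j have exactly 4 common neighbors if and only if (i ≥ 2 and j = i+1) or (i = 1 and j ∈ {2,3}); in all other cases their common neighbors are exactly {u, u^{i,j}}. -/
namespace Stmt14Aux
variable {n : ℕ}

def ofB (u : Fin n → Bool) (s : ℕ → Bool) : Fin n → Bool := fun t => xor (s t.val) (u t)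

lemma ofB_ofB (u : Fin n → Bool) (s s' : ℕ → Bool) :
    ofB (ofB u s) s' = ofB u (fun v => xor (s' v) (s v)) := by
  funext t; simp only [ofB]; cases s t.val <;> cases s' t.val <;> cases u t <;> simp

lemma hFlip_base (u : Fin n → Bool) (k : Fin n) :
    hFlip u k = ofB u (fun v => decide (v = k.val)) := by
  funext t
  by_cases h : t = k
  · have hv : t.val = k.val := congrArg Fin.val h
    simp [hFlip, ofB, if_pos h, hv, h]
  · have hv : ¬ (t.val = k.val) := fun h' => h (Fin.ext h')
    simp [hFlip, ofB, if_neg h, hv]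

lemma cFlip_base (u : Fin n → Bool) (k : Fin n) :
    cFlip u k = ofB u (fun v => decide (v ≤ k.val)) := by
  funext t
  by_cases h : t ≤ k
  · have hv : t.val ≤ k.val := h
    simp [cFlip, ofB, if_pos h, hv]
  · have hv : ¬ (t.val ≤ k.val) := h
    simp [cFlip, ofB, if_neg h, hv]

lemma ofB_eq_iff (u : Fin n → Bool) (s s' : ℕ → Bool) :
    ofB u s = ofB u s' ↔ ∀ v, v < n → s v = s' v := by
  constructor
  · intro h v hv
    have := congrFun h ⟨v, hv⟩
    simp only [ofB] at this
    rcases Bool.eq_false_or_eq_true (u ⟨v, hv⟩) with h' | h' <;>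
      simpa [h'] using this
  · intro h
    funext t
    simp only [ofB, h t.val t.isLt]

lemma u_ne_ofB (u : Fin n → Bool) (s : ℕ → Bool) (v : ℕ) (hv : v < n)
    (hs : s v = true) : u ≠ ofB u s := by
  intro h
  have := congrFun h ⟨v, hv⟩
  simp [ofB, hs] at this

lemma xor_decide (p q : Prop) [Decidable p] [Decidable q] :
    xor (decide p) (decide q) = decide (¬(p ↔ q)) := by
  by_cases p <;> by_cases q <;> simp [*]

lemma adj_of_hFlip (x : Fin n → Bool) (k : Fin n) (w : Fin n → Bool)
    (h : w = hFlip x k) : (AQn n).Adj x w := by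
  subst h
  refine ⟨fun h => ?_, Or.inl ⟨k, rfl⟩⟩
  have := congrFun h k
  simp [hFlip] at this

lemma adj_of_cFlip (x : Fin n → Bool) (m : Fin n) (hm : 1 ≤ m.val) (w : Fin n → Bool)
    (h : w = cFlip x m) : (AQn n).Adj x w := by
  subst h
  refine ⟨fun h => ?_, Or.inr ⟨m, hm, rfl⟩⟩
  have hz : (0 : ℕ) < n := lt_of_le_of_lt (Nat.zero_le _) m.isLt
  have := congrFun h ⟨0, hz⟩
  have h0 : (⟨0, hz⟩ : Fin n) ≤ m := Nat.zero_le _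
  simp [cFlip, if_pos h0] at this

set_option maxHeartbeats 1200000 in
lemma classify (hn : 3 ≤ n) (u : Fin n → Bool) (i j : Fin n) (hij : i.val < j.val)
    (w : Fin n → Bool)
    (ha : (AQn n).Adj (hFlip u i) w) (hb : (AQn n).Adj (hFlip u j) w) :
    w = u ∨ w = hFlip (hFlip u i) j ∨
    (j.val ≤ 2 ∧ (w = hFlip (hFlip u i) ⟨3 - i.val - j.val, by omega⟩ ∨
                  w = hFlip (hFlip u j) ⟨3 - i.val - j.val, by omega⟩)) ∨
    (2 ≤ i.val ∧ j.val = i.val + 1 ∧ (w = cFlip u i ∨ w = cFlip (hFlip u i) j)) := by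
  have hiN := i.isLt; have hjN := j.isLt
  obtain ⟨-, hk | ⟨m, hm1, rfl⟩⟩ := ha
  · obtain ⟨k, rfl⟩ := hk
    obtain ⟨-, hl | ⟨m', hm1', hcc⟩⟩ := hb
    · -- HH
      obtain ⟨l, hl⟩ := hl
      have hkN := k.isLt; have hlN := l.isLt
      simp only [hFlip_base, ofB_ofB] at hl
      rw [ofB_eq_iff] at hl
      have H : ∀ v : ℕ, (¬(v = k.val ↔ v = i.val)) ↔ (¬(v = l.val ↔ v = j.val)) := by
        intro v
        by_cases hv : v < n
        · have := hl v hv; simp only [xor_decide, decide_eq_decide] at this; exact this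
        · omega
      have hi := H i.val; have hj := H j.val; have hk' := H k.val; have hl' := H l.val
      have : (k.val = i.val ∧ l.val = j.val) ∨ (k.val = j.val ∧ l.val = i.val) := by omega
      rcases this with ⟨h1, -⟩ | ⟨h1, -⟩
      · left; rw [Fin.ext h1, hFlip_hFlip]
      · right; left; rw [Fin.ext h1]
    · -- HC : w = hFlip a k = cFlip b m'
      have hcc' : hFlip (hFlip u i) k = cFlip (hFlip u j) m' := hcc ▸ rfl
      have hkN := k.isLt; have hmN := m'.isLt
      simp only [hFlip_base, cFlip_base, ofB_ofB] at hcc'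
      rw [ofB_eq_iff] at hcc'
      have H : ∀ v : ℕ, (¬(v = k.val ↔ v = i.val)) ↔ (¬(v ≤ m'.val ↔ v = j.val)) := by
        intro v
        by_cases hv : v < n
        · have := hcc' v hv; simp only [xor_decide, decide_eq_decide] at this; exact this
        · omega
      have h0 := H 0; have h1 := H 1; have h2 := H 2; have h3 := H 3
      have hhi := H i.val; have hhj := H j.val; have hhk := H k.val
      have hhm := H m'.val; have hhm2 := H (m'.val + 1)
      have hcl : j.val ≤ 2 ∧ k.val = 3 - i.val - j.val := by omega
      right; right; left
      refine ⟨hcl.1, Or.inl ?_⟩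
      have : k = (⟨3 - i.val - j.val, by omega⟩ : Fin n) := by
        apply Fin.ext; exact hcl.2
      rw [this]
  · -- w = cFlip a m
    obtain ⟨-, hl | ⟨m', hm1', hcc⟩⟩ := hb
    · -- CH
      obtain ⟨l, hl⟩ := hl
      have hl0 := hl
      have hlN := l.isLt; have hmN := m.isLt
      simp only [hFlip_base, cFlip_base, ofB_ofB] at hl
      rw [ofB_eq_iff] at hl
      have H : ∀ v : ℕ, (¬(v ≤ m.val ↔ v = i.val)) ↔ (¬(v = l.val ↔ v = j.val)) := by
        intro v
        by_cases hv : v < n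
        · have := hl v hv; simp only [xor_decide, decide_eq_decide] at this; exact this
        · omega
      have h0 := H 0; have h1 := H 1; have h2 := H 2; have h3 := H 3
      have hhi := H i.val; have hhj := H j.val; have hhl := H l.val
      have hhm := H m.val; have hhm2 := H (m.val + 1)
      have hcl : j.val ≤ 2 ∧ l.val = 3 - i.val - j.val := by omega
      right; right; left
      refine ⟨hcl.1, Or.inr ?_⟩
      have hleq : l = (⟨3 - i.val - j.val, by omega⟩ : Fin n) := by
        apply Fin.ext; exact hcl.2
      rw [hl0, hleq]
    · -- CC
      have hcc' : cFlip (hFlip u i) m = cFlip (hFlip u j) m' := hcc ▸ rfl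
      have hmN := m.isLt; have hmN' := m'.isLt
      simp only [hFlip_base, cFlip_base, ofB_ofB] at hcc'
      rw [ofB_eq_iff] at hcc'
      have H : ∀ v : ℕ, (¬(v ≤ m.val ↔ v = i.val)) ↔ (¬(v ≤ m'.val ↔ v = j.val)) := by
        intro v
        by_cases hv : v < n
        · have := hcc' v hv; simp only [xor_decide, decide_eq_decide] at this; exact this
        · omega
      have hhi := H i.val; have hi1 := H (i.val + 1)
      have hhj := H j.val; have hj0 := H (j.val - 1)
      have ha1 := H m.val; have ha2 := H (m.val + 1); have ha3 := H (m.val - 1)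
      have hb1 := H m'.val; have hb2 := H (m'.val + 1)
      have hcl : (2 ≤ i.val ∧ j.val = i.val + 1) ∧
          ((m.val = i.val - 1 ∧ m'.val = j.val) ∨ (m.val = j.val ∧ m'.val = i.val - 1)) := by
        omega
      right; right; right
      refine ⟨hcl.1.1, hcl.1.2, ?_⟩
      rcases hcl.2 with ⟨hm_, -⟩ | ⟨hm_, -⟩
      · left
        have hx : cFlip (hFlip u i) m = cFlip u i := by
          simp only [hFlip_base, cFlip_base, ofB_ofB]
          rw [ofB_eq_iff]
          intro v hv
          simp only [xor_decide, decide_eq_decide, Bool.xor_false]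
          omega
        exact hx
      · right
        have : m = j := by apply Fin.ext; exact hm_
        rw [this]


lemma ncard4 {α : Type*} [Finite α] {a b c d : α} (h1 : a ≠ b) (h2 : a ≠ c) (h3 : a ≠ d)
    (h4 : b ≠ c) (h5 : b ≠ d) (h6 : c ≠ d) : ({a, b, c, d} : Set α).ncard = 4 := by
  rw [Set.ncard_insert_of_notMem (by simp [h1, h2, h3]),
      Set.ncard_insert_of_notMem (by simp [h4, h5]),
      Set.ncard_pair h6]

lemma ofB_ne (u : Fin n → Bool) (s s' : ℕ → Bool) (v : ℕ) (hv : v < n)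
    (hs : s v ≠ s' v) : ofB u s ≠ ofB u s' := fun h => hs ((ofB_eq_iff u s s').1 h v hv)

lemma setEqA (hn : 3 ≤ n) (u : Fin n → Bool) (i j : Fin n) (hij : i.val < j.val)
    (hA : j.val ≤ 2) :
    (AQn n).neighborSet (hFlip u i) ∩ (AQn n).neighborSet (hFlip u j) =
      {u, hFlip (hFlip u i) j, hFlip (hFlip u i) ⟨3 - i.val - j.val, by omega⟩,
       hFlip (hFlip u j) ⟨3 - i.val - j.val, by omega⟩} := by
  have hiN := i.isLt; have hjN := j.isLt
  ext w
  simp only [Set.mem_inter_iff, SimpleGraph.mem_neighborSet, Set.mem_insert_iff,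
    Set.mem_singleton_iff]
  constructor
  · rintro ⟨ha, hb⟩
    rcases classify hn u i j hij w ha hb with h | h | ⟨-, h | h⟩ | ⟨h2i, hj1, -⟩
    · exact Or.inl h
    · exact Or.inr (Or.inl h)
    · exact Or.inr (Or.inr (Or.inl h))
    · exact Or.inr (Or.inr (Or.inr h))
    · omega
  · intro hw
    rcases hw with h | h | h | h
    · exact ⟨adj_of_hFlip _ i _ (h.trans (hFlip_hFlip u i).symm),
             adj_of_hFlip _ j _ (h.trans (hFlip_hFlip u j).symm)⟩
    · refine ⟨adj_of_hFlip _ j _ h, adj_of_hFlip _ i _ (h.trans ?_)⟩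
      simp only [hFlip_base, ofB_ofB]
      rw [ofB_eq_iff]; intro v hv
      simp only [xor_decide, decide_eq_decide, Fin.val_mk, true_iff, iff_true,
        false_iff, iff_false, not_not]
      omega
    · refine ⟨adj_of_hFlip _ _ _ h,
        adj_of_cFlip _ ⟨2, by omega⟩ (by exact one_le_two) _ (h.trans ?_)⟩
      simp only [hFlip_base, cFlip_base, ofB_ofB]
      rw [ofB_eq_iff]; intro v hv
      simp only [xor_decide, decide_eq_decide, Fin.val_mk, true_iff, iff_true,
        false_iff, iff_false, not_not]
      omega
    · refine ⟨adj_of_cFlip _ ⟨2, by omega⟩ (by exact one_le_two) _ (h.trans ?_),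
        adj_of_hFlip _ _ _ h⟩
      simp only [hFlip_base, cFlip_base, ofB_ofB]
      rw [ofB_eq_iff]; intro v hv
      simp only [xor_decide, decide_eq_decide, Fin.val_mk, true_iff, iff_true,
        false_iff, iff_false, not_not]
      omega

lemma setEqB (hn : 3 ≤ n) (u : Fin n → Bool) (i j : Fin n) (hij : i.val < j.val)
    (hB2 : 2 ≤ i.val) (hB1 : j.val = i.val + 1) :
    (AQn n).neighborSet (hFlip u i) ∩ (AQn n).neighborSet (hFlip u j) =
      {u, hFlip (hFlip u i) j, cFlip u i, cFlip (hFlip u i) j} := by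
  have hiN := i.isLt; have hjN := j.isLt
  ext w
  simp only [Set.mem_inter_iff, SimpleGraph.mem_neighborSet, Set.mem_insert_iff,
    Set.mem_singleton_iff]
  constructor
  · rintro ⟨ha, hb⟩
    rcases classify hn u i j hij w ha hb with h | h | ⟨hj2, -⟩ | ⟨-, -, h | h⟩
    · exact Or.inl h
    · exact Or.inr (Or.inl h)
    · omega
    · exact Or.inr (Or.inr (Or.inl h))
    · exact Or.inr (Or.inr (Or.inr h))
  · intro hw
    rcases hw with h | h | h | h
    · exact ⟨adj_of_hFlip _ i _ (h.trans (hFlip_hFlip u i).symm),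
             adj_of_hFlip _ j _ (h.trans (hFlip_hFlip u j).symm)⟩
    · refine ⟨adj_of_hFlip _ j _ h, adj_of_hFlip _ i _ (h.trans ?_)⟩
      simp only [hFlip_base, ofB_ofB]
      rw [ofB_eq_iff]; intro v hv
      simp only [xor_decide, decide_eq_decide, Fin.val_mk, true_iff, iff_true,
        false_iff, iff_false, not_not]
      omega
    · refine ⟨adj_of_cFlip _ ⟨i.val - 1, by omega⟩ (show 1 ≤ i.val - 1 by omega) _
          (h.trans ?_),
        adj_of_cFlip _ j (by omega) _ (h.trans ?_)⟩
      · simp only [hFlip_base, cFlip_base, ofB_ofB]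
        rw [ofB_eq_iff]; intro v hv
        simp only [xor_decide, decide_eq_decide, Fin.val_mk, true_iff, iff_true,
          false_iff, iff_false, not_not]
        omega
      · simp only [hFlip_base, cFlip_base, ofB_ofB]
        rw [ofB_eq_iff]; intro v hv
        simp only [xor_decide, decide_eq_decide, Fin.val_mk, true_iff, iff_true,
          false_iff, iff_false, not_not]
        omega
    · refine ⟨adj_of_cFlip _ j (by omega) _ h,
        adj_of_cFlip _ ⟨i.val - 1, by omega⟩ (show 1 ≤ i.val - 1 by omega) _
          (h.trans ?_)⟩
      simp only [hFlip_base, cFlip_base, ofB_ofB]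
      rw [ofB_eq_iff]; intro v hv
      simp only [xor_decide, decide_eq_decide, Fin.val_mk, true_iff, iff_true,
        false_iff, iff_false, not_not]
      omega

lemma setEqO (hn : 3 ≤ n) (u : Fin n → Bool) (i j : Fin n) (hij : i.val < j.val)
    (hO : ¬ ((1 ≤ i.val ∧ j.val = i.val + 1) ∨ (i.val = 0 ∧ (j.val = 1 ∨ j.val = 2)))) :
    (AQn n).neighborSet (hFlip u i) ∩ (AQn n).neighborSet (hFlip u j) =
      {u, hFlip (hFlip u i) j} := by
  have hiN := i.isLt; have hjN := j.isLt
  ext w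
  simp only [Set.mem_inter_iff, SimpleGraph.mem_neighborSet, Set.mem_insert_iff,
    Set.mem_singleton_iff]
  constructor
  · rintro ⟨ha, hb⟩
    rcases classify hn u i j hij w ha hb with h | h | ⟨hj2, -⟩ | ⟨h2i, hj1, -⟩
    · exact Or.inl h
    · exact Or.inr h
    · omega
    · omega
  · intro hw
    rcases hw with h | h
    · exact ⟨adj_of_hFlip _ i _ (h.trans (hFlip_hFlip u i).symm),
             adj_of_hFlip _ j _ (h.trans (hFlip_hFlip u j).symm)⟩
    · refine ⟨adj_of_hFlip _ j _ h, adj_of_hFlip _ i _ (h.trans ?_)⟩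
      simp only [hFlip_base, ofB_ofB]
      rw [ofB_eq_iff]; intro v hv
      simp only [xor_decide, decide_eq_decide, Fin.val_mk, true_iff, iff_true,
        false_iff, iff_false, not_not]
      omega

end Stmt14Aux

open Stmt14Aux in
/-- for two hypercube edges `u u^i`, `u u^j` of `AQ_n` (`n ≥ 3`) with
`i < j` (indices `i j : Fin n` encoding 1-based bits `i+1 < j+1`), `u^i` and `u^j` have
exactly 4 common neighbours iff (`i+1 ≥ 2` and `j = i+1`) or (`i+1 = 1` and
`j+1 ∈ {2,3}`); otherwise their common neighbours are exactly `{u, u^{i,j}}`. -/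
theorem stmt14 (n : ℕ) (hn : 3 ≤ n) (u : Fin n → Bool) (i j : Fin n)
    (hij : i.val < j.val) :
    (((AQn n).neighborSet (hFlip u i) ∩ (AQn n).neighborSet (hFlip u j)).ncard = 4 ↔
      (1 ≤ i.val ∧ j.val = i.val + 1) ∨ (i.val = 0 ∧ (j.val = 1 ∨ j.val = 2))) ∧
    (¬ ((1 ≤ i.val ∧ j.val = i.val + 1) ∨ (i.val = 0 ∧ (j.val = 1 ∨ j.val = 2))) →
      (AQn n).neighborSet (hFlip u i) ∩ (AQn n).neighborSet (hFlip u j) =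
        {u, hFlip (hFlip u i) j}) := by
  have hiN := i.isLt; have hjN := j.isLt
  have hne0 : u ≠ hFlip (hFlip u i) j := by
    simp only [hFlip_base, ofB_ofB]
    refine u_ne_ofB u _ j.val j.isLt ?_
    simp only [xor_decide, decide_eq_true_eq, Fin.val_mk, true_iff, iff_true,
      false_iff, iff_false, not_not]
    omega
  by_cases hc : (1 ≤ i.val ∧ j.val = i.val + 1) ∨ (i.val = 0 ∧ (j.val = 1 ∨ j.val = 2))
  · refine ⟨⟨fun _ => hc, fun _ => ?_⟩, fun h => absurd hc h⟩
    by_cases hA : j.val ≤ 2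
    · rw [setEqA hn u i j hij hA]
      have e1 : u ≠ hFlip (hFlip u i) ⟨3 - i.val - j.val, by omega⟩ := by
        simp only [hFlip_base, ofB_ofB]
        refine u_ne_ofB u _ (3 - i.val - j.val) (by omega) ?_
        simp only [xor_decide, decide_eq_true_eq, Fin.val_mk, true_iff, iff_true,
          false_iff, iff_false, not_not]
        omega
      have e2 : u ≠ hFlip (hFlip u j) ⟨3 - i.val - j.val, by omega⟩ := by
        simp only [hFlip_base, ofB_ofB]
        refine u_ne_ofB u _ (3 - i.val - j.val) (by omega) ?_
        simp only [xor_decide, decide_eq_true_eq, Fin.val_mk, true_iff, iff_true,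
          false_iff, iff_false, not_not]
        omega
      have e3 : hFlip (hFlip u i) j ≠ hFlip (hFlip u i) ⟨3 - i.val - j.val, by omega⟩ := by
        simp only [hFlip_base, ofB_ofB]
        refine ofB_ne u _ _ j.val j.isLt ?_
        simp only [xor_decide, ne_eq, decide_eq_decide, Fin.val_mk, true_iff, iff_true,
          false_iff, iff_false, not_not]
        omega
      have e4 : hFlip (hFlip u i) j ≠ hFlip (hFlip u j) ⟨3 - i.val - j.val, by omega⟩ := by
        simp only [hFlip_base, ofB_ofB]
        refine ofB_ne u _ _ i.val i.isLt ?_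
        simp only [xor_decide, ne_eq, decide_eq_decide, Fin.val_mk, true_iff, iff_true,
          false_iff, iff_false, not_not]
        omega
      have e5 : hFlip (hFlip u i) ⟨3 - i.val - j.val, by omega⟩ ≠
          hFlip (hFlip u j) ⟨3 - i.val - j.val, by omega⟩ := by
        simp only [hFlip_base, ofB_ofB]
        refine ofB_ne u _ _ i.val i.isLt ?_
        simp only [xor_decide, ne_eq, decide_eq_decide, Fin.val_mk, true_iff, iff_true,
          false_iff, iff_false, not_not]
        omega
      exact ncard4 hne0 e1 e2 e3 e4 e5
    · have hB2 : 2 ≤ i.val := by omega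
      have hB1 : j.val = i.val + 1 := by omega
      rw [setEqB hn u i j hij hB2 hB1]
      have e1 : u ≠ cFlip u i := by
        simp only [cFlip_base]
        refine u_ne_ofB u _ 0 (by omega) ?_
        simp only [decide_eq_true_eq, true_iff, iff_true, false_iff, iff_false, not_not]
        omega
      have e2 : u ≠ cFlip (hFlip u i) j := by
        simp only [hFlip_base, cFlip_base, ofB_ofB]
        refine u_ne_ofB u _ 0 (by omega) ?_
        simp only [xor_decide, decide_eq_true_eq, true_iff, iff_true, false_iff,
          iff_false, not_not]
        omega
      have e3 : hFlip (hFlip u i) j ≠ cFlip u i := by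
        simp only [hFlip_base, cFlip_base, ofB_ofB]
        refine ofB_ne u _ _ 0 (by omega) ?_
        simp only [xor_decide, ne_eq, decide_eq_decide, true_iff, iff_true, false_iff,
          iff_false, not_not]
        omega
      have e4 : hFlip (hFlip u i) j ≠ cFlip (hFlip u i) j := by
        simp only [hFlip_base, cFlip_base, ofB_ofB]
        refine ofB_ne u _ _ 0 (by omega) ?_
        simp only [xor_decide, ne_eq, decide_eq_decide, true_iff, iff_true, false_iff,
          iff_false, not_not]
        omega
      have e5 : cFlip u i ≠ cFlip (hFlip u i) j := by
        simp only [hFlip_base, cFlip_base, ofB_ofB]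
        refine ofB_ne u _ _ i.val i.isLt ?_
        simp only [xor_decide, ne_eq, decide_eq_decide, true_iff, iff_true, false_iff,
          iff_false, not_not]
        omega
      exact ncard4 hne0 e1 e2 e3 e4 e5
  · refine ⟨⟨fun h4 => ?_, fun h => absurd h hc⟩, fun _ => setEqO hn u i j hij hc⟩
    rw [setEqO hn u i j hij hc, Set.ncard_pair hne0] at h4
    omega
end
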